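/- arXiv:0709.2830 — 4 statements merged into one kernel-verified Lean document; each statement's English description precedes it below -/
import Mathlib

section
/- If there exists a nonnegative 𝓕-measurable random variable X such that E[ρX] < ∞ and V₊(X) = +∞, then Problem (P) is ill-posed, i.e. the supremum of V(X) over all a.s. lower-bounded 𝓕-measurable random variables X with E[ρX] = x₀ equals +∞. -/
open MeasureTheory Set Filter
open scoped ENNReal symmDiff

noncomputable section

/-- The data of the continuous-time behavioral portfolio selection model:
a probability space, the pricing kernel `ρ`, the utilities `up = u₊`, `um = u₋`
(with the derivatives `up'`, `up''` of `u₊`), the probability distortions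
`Tp = T₊`, `Tm = T₋`, and the initial endowment `x0`. -/
structure BSetup (Ω : Type*) [MeasurableSpace Ω] where
  P : MeasureTheory.Measure Ω
  isProb : MeasureTheory.IsProbabilityMeasure P
  ρ : Ω → ℝ
  meas_ρ : Measurable ρ
  ρ_pos : ∀ᵐ ω ∂P, 0 < ρ ω
  ρ_int : MeasureTheory.Integrable ρ P
  Eρ_pos : 0 < ∫ ω, ρ ω ∂P
  ρ_atomless : ∀ a : ℝ, P {ω | ρ ω = a} = 0
  up : ℝ → ℝ
  um : ℝ → ℝ
  up' : ℝ → ℝ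
  up'' : ℝ → ℝ
  up_mono : StrictMonoOn up (Set.Ici 0)
  um_mono : StrictMonoOn um (Set.Ici 0)
  up_concave : ConcaveOn ℝ (Set.Ici 0) up
  um_concave : ConcaveOn ℝ (Set.Ici 0) um
  up_zero : up 0 = 0
  um_zero : um 0 = 0
  up_sconcave : StrictConcaveOn ℝ (Set.Ici 0) up
  up_deriv : ∀ x ∈ Set.Ioi (0:ℝ), HasDerivAt up (up' x) x
  up_deriv2 : ∀ x ∈ Set.Ioi (0:ℝ), HasDerivAt up' (up'' x) x
  up'_zero : Filter.Tendsto up' (nhdsWithin 0 (Set.Ioi 0)) Filter.atTop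
  up'_atTop : Filter.Tendsto up' Filter.atTop (nhds 0)
  Tp : ℝ → ℝ
  Tm : ℝ → ℝ
  Tp_mono : StrictMonoOn Tp (Set.Icc 0 1)
  Tm_mono : StrictMonoOn Tm (Set.Icc 0 1)
  Tp_diff : DifferentiableOn ℝ Tp (Set.Icc 0 1)
  Tm_diff : DifferentiableOn ℝ Tm (Set.Icc 0 1)
  Tp_zero : Tp 0 = 0
  Tm_zero : Tm 0 = 0
  Tp_one : Tp 1 = 1
  Tm_one : Tm 1 = 1
  x0 : ℝ

variable {Ω : Type*} [MeasurableSpace Ω]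

/-- `V₊(Y) = ∫₀^∞ T₊(P{u₊(Y) > y}) dy`, as a value in `[0,∞]`. -/
def Vpl (S : BSetup Ω) (Y : Ω → ℝ) : ℝ≥0∞ :=
  ∫⁻ y in Set.Ioi (0:ℝ), ENNReal.ofReal (S.Tp ((S.P {ω | y < S.up (Y ω)}).toReal))

/-- `V₋(Y) = ∫₀^∞ T₋(P{u₋(Y) > y}) dy`, as a value in `[0,∞]`. -/
def Vmn (S : BSetup Ω) (Y : Ω → ℝ) : ℝ≥0∞ :=
  ∫⁻ y in Set.Ioi (0:ℝ), ENNReal.ofReal (S.Tm ((S.P {ω | y < S.um (Y ω)}).toReal))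

/-- `V(X) = V₊(X⁺) − V₋(X⁻)`, an extended real number. -/
def Vval (S : BSetup Ω) (X : Ω → ℝ) : EReal :=
  (Vpl S (fun ω => max (X ω) 0)).toEReal - (Vmn S (fun ω => max (-X ω) 0)).toEReal

/-- Feasibility for Problem (P): `X` is a random variable, a.s. bounded below,
with `E[ρX] = x₀`. -/
def FeasP (S : BSetup Ω) (X : Ω → ℝ) : Prop :=
  AEMeasurable X S.P ∧ (∃ b : ℝ, ∀ᵐ ω ∂S.P, b ≤ X ω) ∧
    MeasureTheory.Integrable (fun ω => S.ρ ω * X ω) S.P ∧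
    (∫ ω, S.ρ ω * X ω ∂S.P) = S.x0

/-- The supremum value of Problem (P). -/
def supP (S : BSetup Ω) : EReal :=
  sSup {v : EReal | ∃ X : Ω → ℝ, FeasP S X ∧ v = Vval S X}

/-- Problem (P) is ill-posed if its supremum value is `+∞`. -/
def IllposedP (S : BSetup Ω) : Prop := supP S = ⊤

/-- `X` is an optimal solution of Problem (P). -/
def OptimalP (S : BSetup Ω) (X : Ω → ℝ) : Prop :=
  FeasP S X ∧ ∀ Y : Ω → ℝ, FeasP S Y → Vval S Y ≤ Vval S X

/-- Feasibility for the positive part problem with parameters `(A, x₊)`. -/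
def FeasPos (S : BSetup Ω) (A : Set Ω) (xp : ℝ) (X : Ω → ℝ) : Prop :=
  AEMeasurable X S.P ∧ (∀ᵐ ω ∂S.P, 0 ≤ X ω) ∧
    MeasureTheory.Integrable (fun ω => S.ρ ω * X ω) S.P ∧
    (∫ ω, S.ρ ω * X ω ∂S.P) = xp ∧
    (∀ᵐ ω ∂S.P, ω ∉ A → X ω = 0)

/-- Optimality for the positive part problem with parameters `(A, x₊)`. -/
def OptPos (S : BSetup Ω) (A : Set Ω) (xp : ℝ) (X : Ω → ℝ) : Prop :=
  FeasPos S A xp X ∧ ∀ Y : Ω → ℝ, FeasPos S A xp Y → Vpl S Y ≤ Vpl S X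

/-- The value `v₊(A, x₊)` of the positive part problem. -/
def vPos (S : BSetup Ω) (A : Set Ω) (xp : ℝ) : EReal :=
  if S.P A = 0 then (if xp = 0 then 0 else ⊥)
  else sSup {v : EReal | ∃ X : Ω → ℝ, FeasPos S A xp X ∧ v = (Vpl S X).toEReal}

/-- Feasibility for the negative part problem with parameters `(A, x₊)`. -/
def FeasNeg (S : BSetup Ω) (A : Set Ω) (xp : ℝ) (X : Ω → ℝ) : Prop :=
  AEMeasurable X S.P ∧ (∀ᵐ ω ∂S.P, 0 ≤ X ω) ∧ (∃ b : ℝ, ∀ᵐ ω ∂S.P, X ω ≤ b) ∧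
    MeasureTheory.Integrable (fun ω => S.ρ ω * X ω) S.P ∧
    (∫ ω, S.ρ ω * X ω ∂S.P) = xp - S.x0 ∧
    (∀ᵐ ω ∂S.P, ω ∈ A → X ω = 0)

/-- Optimality for the negative part problem with parameters `(A, x₊)`. -/
def OptNeg (S : BSetup Ω) (A : Set Ω) (xp : ℝ) (X : Ω → ℝ) : Prop :=
  FeasNeg S A xp X ∧ ∀ Y : Ω → ℝ, FeasNeg S A xp Y → Vmn S X ≤ Vmn S Y

/-- The value `v₋(A, x₊)` of the negative part problem. -/
def vNeg (S : BSetup Ω) (A : Set Ω) (xp : ℝ) : EReal :=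
  if S.P A = 1 then (if xp = S.x0 then 0 else ⊤)
  else sInf {v : EReal | ∃ X : Ω → ℝ, FeasNeg S A xp X ∧ v = (Vmn S X).toEReal}

/-- Feasibility for Problem (S). -/
def FeasS (S : BSetup Ω) (A : Set Ω) (xp : ℝ) : Prop :=
  MeasurableSet A ∧ max S.x0 0 ≤ xp ∧ (S.P A = 0 → xp = 0) ∧ (S.P A = 1 → xp = S.x0)

/-- The objective of Problem (S): `v₊(A, x₊) − v₋(A, x₊)`. -/
def objS (S : BSetup Ω) (A : Set Ω) (xp : ℝ) : EReal := vPos S A xp - vNeg S A xp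

/-- The supremum value of Problem (S). -/
def supS (S : BSetup Ω) : EReal :=
  sSup {v : EReal | ∃ (A : Set Ω) (xp : ℝ), FeasS S A xp ∧ v = objS S A xp}

/-- Optimality for Problem (S). -/
def OptS (S : BSetup Ω) (A : Set Ω) (xp : ℝ) : Prop :=
  FeasS S A xp ∧ ∀ (B : Set Ω) (yp : ℝ), FeasS S B yp → objS S B yp ≤ objS S A xp

/-- `ρ̄ = esssup ρ` (an extended real number). -/
def rhoBar (S : BSetup Ω) : EReal := essSup (fun ω => (S.ρ ω : EReal)) S.P

/-- `ρ̲ = essinf ρ` (an extended real number). -/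
def rhoLow (S : BSetup Ω) : EReal := essInf (fun ω => (S.ρ ω : EReal)) S.P

/-- The event `{ρ ≤ c}`. -/
def lev (S : BSetup Ω) (c : EReal) : Set Ω := {ω | (S.ρ ω : EReal) ≤ c}

/-- Feasibility of `(c, x₊)` for Problems (S_c) and (M). -/
def FeasSc (S : BSetup Ω) (c : EReal) (xp : ℝ) : Prop :=
  rhoLow S ≤ c ∧ c ≤ rhoBar S ∧ max S.x0 0 ≤ xp ∧
    (c = rhoLow S → xp = 0) ∧ (c = rhoBar S → xp = S.x0)

/-- The objective of Problem (S_c): `v₊(c, x₊) − v₋(c, x₊)`. -/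
def objSc (S : BSetup Ω) (c : EReal) (xp : ℝ) : EReal :=
  vPos S (lev S c) xp - vNeg S (lev S c) xp

/-- Optimality for Problem (S_c). -/
def OptSc (S : BSetup Ω) (c : EReal) (xp : ℝ) : Prop :=
  FeasSc S c xp ∧ ∀ (c' : EReal) (xp' : ℝ), FeasSc S c' xp' → objSc S c' xp' ≤ objSc S c xp

/-- The supremum value of Problem (S_c). -/
def supSc (S : BSetup Ω) : EReal :=
  sSup {v : EReal | ∃ (c : EReal) (xp : ℝ), FeasSc S c xp ∧ v = objSc S c xp}

/-- The distribution function `F` of `ρ`. -/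
def Fdist (S : BSetup Ω) (x : ℝ) : ℝ := (S.P {ω | S.ρ ω ≤ x}).toReal

/-- The distribution function of `ρ` evaluated at an extended real `c`. -/
def FdistE (S : BSetup Ω) (c : EReal) : ℝ := (S.P {ω | (S.ρ ω : EReal) ≤ c}).toReal

/-- `E[ρ·1_{ρ>c}]`. -/
def ERhoGt (S : BSetup Ω) (c : EReal) : ℝ :=
  ∫ ω, (if c < (S.ρ ω : EReal) then S.ρ ω else 0) ∂S.P

/-- The objective of Problem (M):
`v₊(c, x₊) − u₋((x₊−x₀)/E[ρ1_{ρ>c}])·T₋(1−F(c))`.  (When `c = ρ̄` and `x₊ = x₀`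
the subtracted term vanishes, realizing the convention of the paper.) -/
def objM (S : BSetup Ω) (c : EReal) (xp : ℝ) : EReal :=
  vPos S (lev S c) xp -
    ((S.um ((xp - S.x0) / ERhoGt S c) * S.Tm (1 - FdistE S c) : ℝ) : EReal)

/-- Optimality for Problem (M). -/
def OptM (S : BSetup Ω) (c : EReal) (xp : ℝ) : Prop :=
  FeasSc S c xp ∧ ∀ (c' : EReal) (xp' : ℝ), FeasSc S c' xp' → objM S c' xp' ≤ objM S c xp

/-- The supremum value of Problem (M). -/
def supM (S : BSetup Ω) : EReal :=
  sSup {v : EReal | ∃ (c : EReal) (xp : ℝ), FeasSc S c xp ∧ v = objM S c xp}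

/-- The generalized inverse `F⁻¹(z) = inf{y ≥ 0 : F(y) ≥ z}` of the distribution
function of `ρ`, valued in the extended reals (`= +∞` if no such `y` exists). -/
def FinvE (S : BSetup Ω) (z : ℝ) : EReal :=
  sInf {c : EReal | ∃ y : ℝ, 0 ≤ y ∧ z ≤ Fdist S y ∧ c = (y : EReal)}

/-- The finiteness condition: `V₊(X) < ∞` whenever `X ≥ 0` a.s. and `E[ρX] < ∞`. -/
def FinCond (S : BSetup Ω) : Prop :=
  ∀ X : Ω → ℝ, AEMeasurable X S.P → (∀ᵐ ω ∂S.P, 0 ≤ X ω) →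
    MeasureTheory.Integrable (fun ω => S.ρ ω * X ω) S.P → Vpl S X < ⊤

/-- `u` is strictly concave at `0`: `u(λx) > λu(x)` for `x > 0`, `λ ∈ (0,1)`. -/
def StrictConcaveAtZero (u : ℝ → ℝ) : Prop :=
  ∀ x : ℝ, 0 < x → ∀ l : ℝ, 0 < l → l < 1 → l * u x < u (l * x)

/-- Subadditivity of a concave function vanishing at `0` on `[0,∞)`. -/
private lemma concave_subadd {u : ℝ → ℝ} (hc : ConcaveOn ℝ (Set.Ici 0) u) (h0 : u 0 = 0)
    {a b : ℝ} (ha : 0 ≤ a) (hb : 0 ≤ b) : u (a + b) ≤ u a + u b := by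
  rcases eq_or_lt_of_le (add_nonneg ha hb) with h | h
  · have ha0 : a = 0 := by linarith
    have hb0 : b = 0 := by linarith
    simp [ha0, hb0, h0]
  · have hs : (0:ℝ) < a + b := h
    have hmem : a + b ∈ Set.Ici (0:ℝ) := le_of_lt hs
    have h0mem : (0:ℝ) ∈ Set.Ici (0:ℝ) := Set.mem_Ici.2 (le_refl 0)
    have h1 : (a/(a+b)) * u (a+b) ≤ u a := by
      have := hc.2 hmem h0mem (div_nonneg ha hs.le) (div_nonneg hb hs.le)
        (by field_simp)
      simpa [h0, smul_eq_mul, div_mul_cancel₀ _ hs.ne'] using this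
    have h2 : (b/(a+b)) * u (a+b) ≤ u b := by
      have := hc.2 hmem h0mem (div_nonneg hb hs.le) (div_nonneg ha hs.le)
        (by field_simp; ring)
      simpa [h0, smul_eq_mul, div_mul_cancel₀ _ hs.ne'] using this
    have hsum : (a/(a+b)) * u (a+b) + (b/(a+b)) * u (a+b) = u (a+b) := by
      field_simp
    linarith

private lemma Tp_le_one (S : BSetup Ω) {m : ℝ≥0∞} (hm : m ≤ 1) : S.Tp m.toReal ≤ 1 := by
  have hmt : m.toReal ≤ 1 := by
    have := ENNReal.toReal_mono (by simp) hm
    simpa using this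
  have := S.Tp_mono.monotoneOn ⟨ENNReal.toReal_nonneg, hmt⟩
    ⟨zero_le_one, le_refl 1⟩ hmt
  simpa [S.Tp_one] using this

private lemma Tm_le_one (S : BSetup Ω) {m : ℝ≥0∞} (hm : m ≤ 1) : S.Tm m.toReal ≤ 1 := by
  have hmt : m.toReal ≤ 1 := by
    have := ENNReal.toReal_mono (by simp) hm
    simpa using this
  have := S.Tm_mono.monotoneOn ⟨ENNReal.toReal_nonneg, hmt⟩
    ⟨zero_le_one, le_refl 1⟩ hmt
  simpa [S.Tm_one] using this

private lemma Tp_ofReal_mono (S : BSetup Ω) {a b : ℝ≥0∞} (hab : a ≤ b) (hb1 : b ≤ 1) :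
    ENNReal.ofReal (S.Tp a.toReal) ≤ ENNReal.ofReal (S.Tp b.toReal) := by
  apply ENNReal.ofReal_le_ofReal
  have hbne : b ≠ ⊤ := (hb1.trans_lt ENNReal.one_lt_top).ne
  have hbt : b.toReal ≤ 1 := by
    have := ENNReal.toReal_mono (by simp) hb1
    simpa using this
  have hat : a.toReal ≤ b.toReal := ENNReal.toReal_mono hbne hab
  exact S.Tp_mono.monotoneOn ⟨ENNReal.toReal_nonneg, hat.trans hbt⟩
    ⟨ENNReal.toReal_nonneg, hbt⟩ hat

private lemma Vpl_mono (S : BSetup Ω) {Y1 Y2 : Ω → ℝ} (h1 : ∀ ω, 0 ≤ Y1 ω)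
    (h : ∀ ω, Y1 ω ≤ Y2 ω) : Vpl S Y1 ≤ Vpl S Y2 := by
  haveI := S.isProb
  refine lintegral_mono fun y => ?_
  refine Tp_ofReal_mono S (measure_mono fun ω hω => ?_) prob_le_one
  have := S.up_mono.monotoneOn (Set.mem_Ici.2 (h1 ω))
    (Set.mem_Ici.2 ((h1 ω).trans (h ω))) (h ω)
  exact lt_of_lt_of_le hω this

/-- Key estimate: shifting down by a constant `b ≥ 0` costs at most `u₊(b)` in value. -/
private lemma Vpl_shift (S : BSetup Ω) (X : Ω → ℝ) (hX0 : ∀ᵐ ω ∂S.P, 0 ≤ X ω)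
    {b : ℝ} (hb : 0 ≤ b) :
    Vpl S X ≤ ENNReal.ofReal (S.up b) + Vpl S (fun ω => max (X ω - b) 0) := by
  haveI := S.isProb
  set c := S.up b with hc_def
  have hc0 : 0 ≤ c := by
    have := S.up_mono.monotoneOn (Set.mem_Ici.2 (le_refl (0:ℝ))) (Set.mem_Ici.2 hb) hb
    simpa [hc_def, S.up_zero] using this
  set g : ℝ → ℝ≥0∞ := fun y => ENNReal.ofReal (S.Tp ((S.P {ω | y < S.up (X ω)}).toReal))
    with hg_def
  have hg1 : ∀ y, g y ≤ 1 := by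
    intro y
    simp only [hg_def]
    rw [show (1:ℝ≥0∞) = ENNReal.ofReal 1 by simp]
    exact ENNReal.ofReal_le_ofReal (Tp_le_one S prob_le_one)
  have hsplit : Vpl S X ≤ (∫⁻ y in Set.Ioc 0 c, g y) + ∫⁻ y in Set.Ioi c, g y := by
    calc Vpl S X = ∫⁻ y in Set.Ioi 0, g y := rfl
      _ ≤ ∫⁻ y in Set.Ioc 0 c ∪ Set.Ioi c, g y := by
          refine lintegral_mono_set fun y hy => ?_
          rcases le_or_gt y c with h' | h'
          · exact Or.inl ⟨hy, h'⟩
          · exact Or.inr h'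
      _ ≤ _ := lintegral_union_le _ _ _
  have h1 : (∫⁻ y in Set.Ioc 0 c, g y) ≤ ENNReal.ofReal c := by
    calc (∫⁻ y in Set.Ioc 0 c, g y) ≤ ∫⁻ _ in Set.Ioc 0 c, 1 :=
          lintegral_mono fun y => hg1 y
      _ = volume (Set.Ioc 0 c) := by simp
      _ = ENNReal.ofReal c := by simp [Real.volume_Ioc]
  have h2 : (∫⁻ y in Set.Ioi c, g y) = ∫⁻ y in Set.Ioi 0, g (y + c) := by
    have hme : MeasurableEmbedding (fun y : ℝ => y + c) :=
      (MeasurableEquiv.addRight c).measurableEmbedding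
    have hrm : volume.restrict (Set.Ioi c) =
        Measure.map (fun y : ℝ => y + c) (volume.restrict (Set.Ioi 0)) := by
      conv_lhs => rw [← map_add_right_eq_self volume c]
      rw [Measure.restrict_map hme.measurable measurableSet_Ioi,
        Set.preimage_add_const_Ioi]
      norm_num
    rw [hrm, hme.lintegral_map]
  have h3 : (∫⁻ y in Set.Ioi 0, g (y + c)) ≤ Vpl S (fun ω => max (X ω - b) 0) := by
    refine setLIntegral_mono' measurableSet_Ioi fun y hy => ?_
    refine Tp_ofReal_mono S (measure_mono_ae ?_) prob_le_one
    filter_upwards [hX0] with ω hω hmem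
    replace hmem : y + c < S.up (X ω) := hmem
    show y < S.up (max (X ω - b) 0)
    have hXb : b < X ω := by
      by_contra hle
      push_neg at hle
      have : S.up (X ω) ≤ c :=
        S.up_mono.monotoneOn (Set.mem_Ici.2 hω) (Set.mem_Ici.2 hb) hle
      have : y + c < c := lt_of_lt_of_le hmem this
      have hy0 : (0:ℝ) < y := hy
      linarith
    have hmax : max (X ω - b) 0 = X ω - b := max_eq_left (by linarith)
    rw [hmax]
    have hsub : S.up (X ω) ≤ S.up (X ω - b) + c := by
      have := concave_subadd S.up_concave S.up_zero (a := X ω - b) (b := b)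
        (by linarith) hb
      simpa [hc_def] using this
    linarith
  calc Vpl S X ≤ (∫⁻ y in Set.Ioc 0 c, g y) + ∫⁻ y in Set.Ioi c, g y := hsplit
    _ ≤ ENNReal.ofReal c + Vpl S (fun ω => max (X ω - b) 0) := by
        rw [h2]; exact add_le_add h1 h3

/-- Theorem 3.1 / ill-posedness from the gain part:
If there exists a nonnegative random variable `X` with `E[ρX] < ∞` and
`V₊(X) = +∞`, then Problem (P) is ill-posed. -/
theorem illposed_of_infinite_gain_value (S : BSetup Ω)
    (h : ∃ X : Ω → ℝ, AEMeasurable X S.P ∧ (∀ᵐ ω ∂S.P, 0 ≤ X ω) ∧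
      MeasureTheory.Integrable (fun ω => S.ρ ω * X ω) S.P ∧ Vpl S X = ⊤) :
    IllposedP S := by
  haveI := S.isProb
  obtain ⟨X, hXm, hX0, hXint, hXV⟩ := h
  set E := ∫ ω, S.ρ ω ∂S.P with hE_def
  have hE : E ≠ 0 := ne_of_gt S.Eρ_pos
  set b : ℝ := ((∫ ω, S.ρ ω * X ω ∂S.P) - S.x0) / E with hb_def
  set X' : Ω → ℝ := fun ω => X ω - b with hX'_def
  have hρb : MeasureTheory.Integrable (fun ω => S.ρ ω * b) S.P := S.ρ_int.mul_const b
  have heq : (fun ω => S.ρ ω * X' ω) = fun ω => S.ρ ω * X ω - S.ρ ω * b := by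
    funext ω; simp only [hX'_def]; ring
  have hX'int : MeasureTheory.Integrable (fun ω => S.ρ ω * X' ω) S.P := by
    rw [heq]; exact hXint.sub hρb
  have hX'val : (∫ ω, S.ρ ω * X' ω ∂S.P) = S.x0 := by
    rw [heq, integral_sub hXint hρb, integral_mul_const, ← hE_def, hb_def]
    field_simp
    ring
  have hfeas : FeasP S X' := by
    refine ⟨hXm.sub aemeasurable_const, ⟨-b, ?_⟩, hX'int, hX'val⟩
    filter_upwards [hX0] with ω hω
    simp only [hX'_def]; linarith
  set b' : ℝ := max b 0 with hb'_def
  have hb'0 : 0 ≤ b' := le_max_right _ _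
  have hkey := Vpl_shift S X hX0 hb'0
  rw [hXV] at hkey
  have htop1 : Vpl S (fun ω => max (X ω - b') 0) = ⊤ := by
    by_contra hne
    have hlt : ENNReal.ofReal (S.up b') + Vpl S (fun ω => max (X ω - b') 0) < ⊤ :=
      ENNReal.add_lt_top.mpr ⟨ENNReal.ofReal_lt_top, lt_top_iff_ne_top.2 hne⟩
    exact hlt.ne (top_le_iff.mp hkey)
  have htopP : Vpl S (fun ω => max (X' ω) 0) = ⊤ := by
    refine top_le_iff.mp ?_
    rw [← htop1]
    refine Vpl_mono S (fun ω => le_max_right _ _) (fun ω => ?_)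
    exact max_le_max (by simp only [hX'_def]; linarith [le_max_left b (0:ℝ)]) (le_refl 0)
  set Y : Ω → ℝ := fun ω => max (-X' ω) 0 with hY_def
  set c' : ℝ := S.um b' with hc'_def
  have hc'0 : 0 ≤ c' := by
    have := S.um_mono.monotoneOn (Set.mem_Ici.2 (le_refl (0:ℝ))) (Set.mem_Ici.2 hb'0) hb'0
    simpa [hc'_def, S.um_zero] using this
  have hYb : ∀ᵐ ω ∂S.P, S.um (Y ω) ≤ c' := by
    filter_upwards [hX0] with ω hω
    have h1 : Y ω ≤ b' := by
      simp only [hY_def, hX'_def]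
      exact max_le (by simp only [hb'_def]; linarith [le_max_left b (0:ℝ)]) hb'0
    exact S.um_mono.monotoneOn (Set.mem_Ici.2 (le_max_right _ _)) (Set.mem_Ici.2 hb'0) h1
  set gm : ℝ → ℝ≥0∞ := fun y => ENNReal.ofReal (S.Tm ((S.P {ω | y < S.um (Y ω)}).toReal))
    with hgm_def
  have hgm1 : ∀ y, gm y ≤ 1 := by
    intro y
    simp only [hgm_def]
    rw [show (1:ℝ≥0∞) = ENNReal.ofReal 1 by simp]
    exact ENNReal.ofReal_le_ofReal (Tm_le_one S prob_le_one)
  have hVmn : Vmn S Y ≤ ENNReal.ofReal c' := by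
    have hsplit : Vmn S Y ≤ (∫⁻ y in Set.Ioc 0 c', gm y) + ∫⁻ y in Set.Ioi c', gm y := by
      calc Vmn S Y = ∫⁻ y in Set.Ioi 0, gm y := rfl
        _ ≤ ∫⁻ y in Set.Ioc 0 c' ∪ Set.Ioi c', gm y := by
            refine lintegral_mono_set fun y hy => ?_
            rcases le_or_gt y c' with h' | h'
            · exact Or.inl ⟨hy, h'⟩
            · exact Or.inr h'
        _ ≤ _ := lintegral_union_le _ _ _
    have h1 : (∫⁻ y in Set.Ioc 0 c', gm y) ≤ ENNReal.ofReal c' := by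
      calc (∫⁻ y in Set.Ioc 0 c', gm y) ≤ ∫⁻ _ in Set.Ioc 0 c', 1 :=
            lintegral_mono fun y => hgm1 y
        _ = volume (Set.Ioc 0 c') := by simp
        _ = ENNReal.ofReal c' := by simp [Real.volume_Ioc]
    have h2 : (∫⁻ y in Set.Ioi c', gm y) = 0 := by
      refine le_antisymm ?_ zero_le
      have : (∫⁻ y in Set.Ioi c', gm y) ≤ ∫⁻ _ in Set.Ioi c', 0 := by
        refine setLIntegral_mono' measurableSet_Ioi fun y hy => ?_
        have hnull : S.P {ω | y < S.um (Y ω)} = 0 := by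
          rw [measure_eq_zero_iff_ae_notMem]
          filter_upwards [hYb] with ω hω
          simp only [Set.mem_setOf_eq, not_lt]
          exact hω.trans (le_of_lt hy)
        simp [hgm_def, hnull, S.Tm_zero]
      simpa using this
    calc Vmn S Y ≤ (∫⁻ y in Set.Ioc 0 c', gm y) + ∫⁻ y in Set.Ioi c', gm y := hsplit
      _ ≤ ENNReal.ofReal c' + 0 := by rw [h2]; exact add_le_add h1 (le_refl 0)
      _ = ENNReal.ofReal c' := by simp
  have hVmn_ne : Vmn S Y ≠ ⊤ := (lt_of_le_of_lt hVmn ENNReal.ofReal_lt_top).ne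
  have hVval : Vval S X' = ⊤ := by
    show (Vpl S (fun ω => max (X' ω) 0)).toEReal - (Vmn S (fun ω => max (-X' ω) 0)).toEReal = ⊤
    rw [htopP]
    have hne_top : ((Vmn S Y : ℝ≥0∞) : EReal) ≠ ⊤ := by
      simpa [EReal.coe_ennreal_eq_top_iff] using hVmn_ne
    have hne_bot : ((Vmn S Y : ℝ≥0∞) : EReal) ≠ ⊥ := EReal.coe_ennreal_ne_bot _
    rw [show (fun ω => max (-X' ω) 0) = Y from rfl, EReal.coe_ennreal_top,
      ← EReal.coe_toReal hne_top hne_bot, EReal.top_sub_coe]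
  show supP S = ⊤
  have hmem : (⊤ : EReal) ∈ {v : EReal | ∃ X : Ω → ℝ, FeasP S X ∧ v = Vval S X} :=
    ⟨X', hfeas, hVval.symm⟩
  exact top_le_iff.mp (le_sSup hmem)


end
end

section
/- If sup_{x ≥ 0} u₊(x) = +∞, esssup ρ = +∞, and T₋(x) = x for all x ∈ [0,1], then Problem (P) is ill-posed, i.e. the supremum of V(X) over all a.s. lower-bounded 𝓕-measurable random variables X with E[ρX] = x₀ equals +∞. -/
open MeasureTheory Set Filter
open scoped ENNReal symmDiff

noncomputable section

variable {Ω : Type*} [MeasurableSpace Ω]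

private lemma um_growth {Ω : Type*} [MeasurableSpace Ω] (S : BSetup Ω) {b : ℝ} (hb : 0 ≤ b) :
    S.um b ≤ S.um 1 * (1 + b) := by
  have h0 : (0:ℝ) ∈ Set.Ici (0:ℝ) := Set.mem_Ici.2 le_rfl
  have h1 : (1:ℝ) ∈ Set.Ici (0:ℝ) := Set.mem_Ici.2 zero_le_one
  have hbmem : b ∈ Set.Ici (0:ℝ) := Set.mem_Ici.2 hb
  have hum1 : 0 ≤ S.um 1 := by
    have := S.um_mono.monotoneOn h0 h1 zero_le_one
    rw [S.um_zero] at this; exact this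
  rcases le_or_gt b 1 with hb1 | hb1
  · have h := S.um_mono.monotoneOn hbmem h1 hb1
    nlinarith
  · have hbpos : (0:ℝ) < b := lt_trans one_pos hb1
    have hcc := S.um_concave.2 hbmem h0
      (show (0:ℝ) ≤ 1/b by positivity)
      (show (0:ℝ) ≤ 1 - 1/b by rw [sub_nonneg]; exact div_le_one_of_le₀ hb1.le hbpos.le)
      (by ring)
    simp only [smul_eq_mul, mul_zero, add_zero, S.um_zero] at hcc
    rw [one_div_mul_cancel hbpos.ne'] at hcc
    have hb2 : S.um b ≤ b * S.um 1 := by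
      have h2 := mul_le_mul_of_nonneg_left hcc hbpos.le
      calc S.um b = b * (1 / b * S.um b) := by field_simp
        _ ≤ b * S.um 1 := h2
    nlinarith

/-- Main construction: for every `M` there is a feasible `X` with `V(X) > M`. -/
private lemma exists_feasible_gt {Ω : Type*} [MeasurableSpace Ω] (S : BSetup Ω)
    (hup_unbdd : ∀ M : ℝ, ∃ x : ℝ, 0 ≤ x ∧ M < S.up x)
    (hbar : rhoBar S = ⊤)
    (hTm : ∀ x ∈ Set.Icc (0:ℝ) 1, S.Tm x = x) (M : ℝ) :
    ∃ X : Ω → ℝ, FeasP S X ∧ (M : EReal) < Vval S X := by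
  haveI := S.isProb
  -- a set B on which ρ is bounded above and below, of positive probability
  obtain ⟨n, hPBne⟩ : ∃ n : ℕ, S.P {ω | 1/((n:ℝ)+1) ≤ S.ρ ω ∧ S.ρ ω ≤ (n:ℝ)+1} ≠ 0 := by
    by_contra h
    push_neg at h
    have hU : S.P (⋃ n : ℕ, {ω | 1/((n:ℝ)+1) ≤ S.ρ ω ∧ S.ρ ω ≤ (n:ℝ)+1}) = 0 :=
      measure_iUnion_null h
    have hsub : {ω | 0 < S.ρ ω} ⊆ ⋃ n : ℕ, {ω | 1/((n:ℝ)+1) ≤ S.ρ ω ∧ S.ρ ω ≤ (n:ℝ)+1} := by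
      intro ω hω
      obtain ⟨n, hn⟩ := exists_nat_gt (max (S.ρ ω) (1 / S.ρ ω))
      have h1 : S.ρ ω < (n:ℝ) := lt_of_le_of_lt (le_max_left _ _) hn
      have h2 : 1 / S.ρ ω < (n:ℝ) := lt_of_le_of_lt (le_max_right _ _) hn
      refine Set.mem_iUnion.2 ⟨n, ?_, by linarith⟩
      rw [div_le_iff₀ (by positivity)]
      have := (div_lt_iff₀ hω).mp (lt_of_lt_of_le h2 (by linarith : (n:ℝ) ≤ (n:ℝ)+1))
      linarith [mul_comm (S.ρ ω) ((n:ℝ)+1)]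
    have hpos0 : S.P {ω | ¬ 0 < S.ρ ω} = 0 := by
      rw [← ae_iff]; exact S.ρ_pos
    have huniv : (Set.univ : Set Ω) ⊆
        (⋃ n : ℕ, {ω | 1/((n:ℝ)+1) ≤ S.ρ ω ∧ S.ρ ω ≤ (n:ℝ)+1}) ∪ {ω | ¬ 0 < S.ρ ω} := by
      intro ω _
      by_cases hω : 0 < S.ρ ω
      · exact Or.inl (hsub hω)
      · exact Or.inr hω
    have := (measure_mono (μ := S.P) huniv).trans (measure_union_le _ _)
    rw [hU, hpos0, measure_univ] at this
    simp at this
  set B : Set Ω := {ω | 1/((n:ℝ)+1) ≤ S.ρ ω ∧ S.ρ ω ≤ (n:ℝ)+1} with hBdef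
  have hBmeas : MeasurableSet B := S.meas_ρ measurableSet_Icc
  set PBr : ℝ := (S.P B).toReal with hPBrdef
  have hPBr : 0 < PBr := ENNReal.toReal_pos hPBne (measure_ne_top _ _)
  have hPBr1 : PBr ≤ 1 := by
    have : S.P B ≤ 1 := prob_le_one
    have := ENNReal.toReal_mono ENNReal.one_ne_top this
    simpa using this
  set IB : ℝ := ∫ ω in B, S.ρ ω ∂S.P with hIBdef
  have hIB : 0 < IB := by
    have h := setIntegral_ge_of_const_le_real (c := 1/((n:ℝ)+1)) hBmeas (measure_ne_top _ _)
      (fun ω hω => hω.1) (S.ρ_int.integrableOn)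
    have : 0 < 1/((n:ℝ)+1) * PBr := by positivity
    rw [measureReal_def] at h
    linarith
  set t : ℝ := S.Tp PBr with htdef
  have ht : 0 < t := by
    have := S.Tp_mono (Set.mem_Icc.2 ⟨le_rfl, zero_le_one⟩)
      (Set.mem_Icc.2 ⟨hPBr.le, hPBr1⟩) hPBr
    rwa [S.Tp_zero] at this
  set C : ℝ := 2 * S.um 1 with hCdef
  have hum1 : 0 ≤ S.um 1 := by
    have := S.um_mono.monotoneOn (Set.mem_Ici.2 le_rfl) (Set.mem_Ici.2 zero_le_one) zero_le_one
    rw [S.um_zero] at this; exact this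
  have hC : 0 ≤ C := by positivity
  -- choose a
  obtain ⟨x, hx0, hxM⟩ := hup_unbdd ((M + C)/t)
  set a : ℝ := max x (max (S.x0/IB) 0) with hadef
  have ha0 : 0 ≤ a := le_trans (le_max_right _ _) (le_max_right _ _)
  have hax : x ≤ a := le_max_left _ _
  have haIB : S.x0 ≤ a * IB := by
    have h1 : S.x0/IB ≤ a := le_trans (le_max_left _ _) (le_max_right _ _)
    calc S.x0 = S.x0/IB * IB := (div_mul_cancel₀ _ hIB.ne').symm
    _ ≤ a * IB := mul_le_mul_of_nonneg_right h1 hIB.le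
  have hupa0 : 0 ≤ S.up a := by
    have := S.up_mono.monotoneOn (Set.mem_Ici.2 le_rfl) (Set.mem_Ici.2 ha0) ha0
    rw [S.up_zero] at this; exact this
  have hupa : M + C < t * S.up a := by
    have h1 : S.up x ≤ S.up a := S.up_mono.monotoneOn (Set.mem_Ici.2 hx0) (Set.mem_Ici.2 ha0) hax
    have h2 : (M + C)/t < S.up a := lt_of_lt_of_le hxM h1
    have := (div_lt_iff₀ ht).mp h2
    linarith
  -- choose c
  set c : ℝ := max ((n:ℝ)+1) (max 1 (a * IB - S.x0)) with hcdef
  have hc1 : (1:ℝ) ≤ c := le_trans (le_max_left _ _) (le_max_right _ _)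
  have hcpos : (0:ℝ) < c := lt_of_lt_of_le one_pos hc1
  have hcn : (n:ℝ)+1 ≤ c := le_max_left _ _
  have hcb : a * IB - S.x0 ≤ c := le_trans (le_max_right _ _) (le_max_right _ _)
  set A : Set Ω := {ω | c < S.ρ ω} with hAdef
  have hAmeas : MeasurableSet A := S.meas_ρ measurableSet_Ioi
  have hdisj : ∀ ω, ω ∈ B → ω ∉ A := by
    intro ω hωB hωA
    have h1 : S.ρ ω ≤ (n:ℝ)+1 := hωB.2
    have h2 : c < S.ρ ω := hωA
    linarith
  have hPAne : S.P A ≠ 0 := by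
    intro h
    have hae : ∀ᵐ ω ∂S.P, (fun ω => (S.ρ ω : EReal)) ω ≤ (fun _ => (c : EReal)) ω := by
      rw [ae_iff]
      convert h using 2
      ext ω
      simp [EReal.coe_le_coe_iff, not_le, hAdef]
    have hess : rhoBar S ≤ (c : EReal) := essSup_le_of_ae_le _ hae
    rw [hbar] at hess
    exact absurd hess (not_le.2 (EReal.coe_lt_top c))
  set PAr : ℝ := (S.P A).toReal with hPArdef
  have hPAr : 0 < PAr := ENNReal.toReal_pos hPAne (measure_ne_top _ _)
  have hPAr1 : PAr ≤ 1 := by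
    have : S.P A ≤ 1 := prob_le_one
    have := ENNReal.toReal_mono ENNReal.one_ne_top this
    simpa using this
  set IA : ℝ := ∫ ω in A, S.ρ ω ∂S.P with hIAdef
  have hcIA : c * PAr ≤ IA :=
    setIntegral_ge_of_const_le_real hAmeas (measure_ne_top _ _)
      (fun ω hω => le_of_lt hω) (S.ρ_int.integrableOn)
  have hIA : 0 < IA := lt_of_lt_of_le (by positivity) hcIA
  set b : ℝ := (a * IB - S.x0)/IA with hbdef
  have hb0 : 0 ≤ b := div_nonneg (by linarith) hIA.le
  have hbPA : b * PAr ≤ 1 := by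
    have h1 : PAr ≤ IA / c := (le_div_iff₀ hcpos).2 (by linarith [mul_comm c PAr])
    calc b * PAr ≤ b * (IA / c) := mul_le_mul_of_nonneg_left h1 hb0
    _ = (a * IB - S.x0) / c := by
        rw [hbdef]; field_simp
    _ ≤ 1 := (div_le_one hcpos).2 hcb
  -- the random variable
  set X : Ω → ℝ := fun ω => B.indicator (fun _ => a) ω + A.indicator (fun _ => -b) ω with hXdef
  set Xp : Ω → ℝ := B.indicator (fun _ => a) with hXpdef
  set Xm : Ω → ℝ := A.indicator (fun _ => b) with hXmdef
  have hXp : (fun ω => max (X ω) 0) = Xp := by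
    funext ω
    by_cases hωB : ω ∈ B
    · have hωA : ω ∉ A := hdisj ω hωB
      simp only [hXdef, hXpdef, Set.indicator_of_mem hωB, Set.indicator_of_notMem hωA,
        add_zero]
      exact max_eq_left ha0
    · by_cases hωA : ω ∈ A
      · simp only [hXdef, hXpdef, Set.indicator_of_notMem hωB, Set.indicator_of_mem hωA,
          zero_add]
        exact max_eq_right (by linarith)
      · simp only [hXdef, hXpdef, Set.indicator_of_notMem hωB, Set.indicator_of_notMem hωA,
          add_zero]
        exact max_self 0
  have hXm : (fun ω => max (-X ω) 0) = Xm := by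
    funext ω
    by_cases hωB : ω ∈ B
    · have hωA : ω ∉ A := hdisj ω hωB
      simp only [hXdef, hXpdef, hXmdef, Set.indicator_of_mem hωB, Set.indicator_of_notMem hωA,
        add_zero]
      exact max_eq_right (by linarith)
    · by_cases hωA : ω ∈ A
      · simp only [hXdef, hXpdef, hXmdef, Set.indicator_of_notMem hωB, Set.indicator_of_mem hωA,
          zero_add, neg_neg]
        exact max_eq_left hb0
      · simp only [hXdef, hXpdef, hXmdef, Set.indicator_of_notMem hωB, Set.indicator_of_notMem hωA,
          add_zero, neg_zero]
        exact max_self 0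
  -- feasibility
  have hρX : (fun ω => S.ρ ω * X ω) =
      (fun ω => B.indicator (fun ω => S.ρ ω * a) ω + A.indicator (fun ω => S.ρ ω * (-b)) ω) := by
    funext ω
    by_cases hωB : ω ∈ B
    · have hωA : ω ∉ A := hdisj ω hωB
      simp only [hXdef, hXpdef, Set.indicator_of_mem hωB, Set.indicator_of_notMem hωA]
      ring
    · by_cases hωA : ω ∈ A
      · simp only [hXdef, hXpdef, Set.indicator_of_notMem hωB, Set.indicator_of_mem hωA]
        ring
      · simp only [hXdef, hXpdef, Set.indicator_of_notMem hωB, Set.indicator_of_notMem hωA]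
        ring
  have hint1 : MeasureTheory.Integrable (B.indicator (fun ω => S.ρ ω * a)) S.P :=
    (S.ρ_int.mul_const a).indicator hBmeas
  have hint2 : MeasureTheory.Integrable (A.indicator (fun ω => S.ρ ω * (-b))) S.P :=
    (S.ρ_int.mul_const (-b)).indicator hAmeas
  have hρXint : MeasureTheory.Integrable (fun ω => S.ρ ω * X ω) S.P := by
    rw [hρX]; exact hint1.add hint2
  have hρXval : (∫ ω, S.ρ ω * X ω ∂S.P) = S.x0 := by
    rw [hρX, integral_add hint1 hint2, integral_indicator hBmeas, integral_indicator hAmeas]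
    rw [integral_mul_const, integral_mul_const]
    rw [← hIBdef, ← hIAdef, hbdef]
    field_simp
    ring
  have hfeas : FeasP S X := by
    refine ⟨(((measurable_const.indicator hBmeas).add
      (measurable_const.indicator hAmeas)).aemeasurable), ⟨-b, ?_⟩, hρXint, hρXval⟩
    refine Filter.Eventually.of_forall (fun ω => ?_)
    by_cases hωB : ω ∈ B
    · have hωA : ω ∉ A := hdisj ω hωB
      simp only [hXdef, hXpdef, Set.indicator_of_mem hωB, Set.indicator_of_notMem hωA, add_zero]
      linarith
    · by_cases hωA : ω ∈ A
      · simp only [hXdef, hXpdef, Set.indicator_of_notMem hωB, Set.indicator_of_mem hωA, zero_add,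
          le_refl]
      · simp only [hXdef, hXpdef, Set.indicator_of_notMem hωB, Set.indicator_of_notMem hωA, add_zero]
        linarith
  -- lower bound on Vpl
  have hVpl : ENNReal.ofReal (t * S.up a) ≤ Vpl S Xp := by
    have key : ∀ y : ℝ, (Set.Ioo (0:ℝ) (S.up a)).indicator (fun _ => ENNReal.ofReal t) y ≤
        ENNReal.ofReal (S.Tp ((S.P {ω | y < S.up (Xp ω)}).toReal)) := by
      intro y
      by_cases hy : y ∈ Set.Ioo (0:ℝ) (S.up a)
      · rw [Set.indicator_of_mem hy]
        refine ENNReal.ofReal_le_ofReal ?_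
        have hsub : B ⊆ {ω | y < S.up (Xp ω)} := by
          intro ω hω
          have hXpa : Xp ω = a := by
            simp only [hXpdef]; exact Set.indicator_of_mem hω _
          rw [Set.mem_setOf_eq, hXpa]
          exact hy.2
        have hle : PBr ≤ (S.P {ω | y < S.up (Xp ω)}).toReal :=
          ENNReal.toReal_mono (measure_ne_top _ _) (measure_mono hsub)
        have hmem1 : PBr ∈ Set.Icc (0:ℝ) 1 := ⟨hPBr.le, hPBr1⟩
        have hmem2 : (S.P {ω | y < S.up (Xp ω)}).toReal ∈ Set.Icc (0:ℝ) 1 := by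
          constructor
          · exact ENNReal.toReal_nonneg
          · have : S.P {ω | y < S.up (Xp ω)} ≤ 1 := prob_le_one
            have := ENNReal.toReal_mono ENNReal.one_ne_top this
            simpa using this
        exact S.Tp_mono.monotoneOn hmem1 hmem2 hle
      · rw [Set.indicator_of_notMem hy]
        exact zero_le'
    calc ENNReal.ofReal (t * S.up a)
        = ∫⁻ y in Set.Ioi (0:ℝ), (Set.Ioo (0:ℝ) (S.up a)).indicator
            (fun _ => ENNReal.ofReal t) y := by
          rw [lintegral_indicator measurableSet_Ioo, setLIntegral_const,
            Measure.restrict_apply measurableSet_Ioo,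
            Set.inter_eq_left.2 Set.Ioo_subset_Ioi_self]
          rw [Real.volume_Ioo, sub_zero, ← ENNReal.ofReal_mul ht.le]
      _ ≤ Vpl S Xp := lintegral_mono key
  -- upper bound on Vmn
  have hVmn : Vmn S Xm ≤ ENNReal.ofReal C := by
    have humb0 : 0 ≤ S.um b := by
      have := S.um_mono.monotoneOn (Set.mem_Ici.2 le_rfl) (Set.mem_Ici.2 hb0) hb0
      rw [S.um_zero] at this; exact this
    have step1 : Vmn S Xm ≤ ∫⁻ y in Set.Ioi (0:ℝ), (Set.Ioo (0:ℝ) (S.um b)).indicator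
          (fun _ => ENNReal.ofReal PAr) y := by
        refine lintegral_mono_ae ((ae_restrict_iff' measurableSet_Ioi).2
          (Filter.Eventually.of_forall ?_))
        intro y hy
        have hy0 : (0:ℝ) < y := hy
        by_cases hyb : y < S.um b
        · rw [Set.indicator_of_mem (Set.mem_Ioo.mpr ⟨hy0, hyb⟩)]
          have harg : (S.P {ω | y < S.um (Xm ω)}).toReal ∈ Set.Icc (0:ℝ) 1 := by
            constructor
            · exact ENNReal.toReal_nonneg
            · have : S.P {ω | y < S.um (Xm ω)} ≤ 1 := prob_le_one
              have := ENNReal.toReal_mono ENNReal.one_ne_top this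
              simpa using this
          rw [hTm _ harg]
          refine ENNReal.ofReal_le_ofReal ?_
          refine ENNReal.toReal_mono (measure_ne_top _ _) (measure_mono ?_)
          intro ω hω
          by_contra hωA
          have hXm0 : Xm ω = 0 := by
            simp only [hXmdef]; exact Set.indicator_of_notMem hωA _
          rw [Set.mem_setOf_eq, hXm0, S.um_zero] at hω
          linarith
        · have hset : {ω | y < S.um (Xm ω)} = ∅ := by
            ext ω
            simp only [Set.mem_setOf_eq, Set.mem_empty_iff_false, iff_false, not_lt]
            by_cases hωA : ω ∈ A
            · have hh : Xm ω = b := by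
                simp only [hXmdef]; exact Set.indicator_of_mem hωA _
              rw [hh]; linarith
            · have hh : Xm ω = 0 := by
                simp only [hXmdef]; exact Set.indicator_of_notMem hωA _
              rw [hh, S.um_zero]; linarith
          rw [hset, measure_empty]
          simp only [ENNReal.toReal_zero]
          rw [S.Tm_zero, ENNReal.ofReal_zero]
          exact zero_le'
    calc Vmn S Xm ≤ _ := step1
      _ = ENNReal.ofReal PAr * ENNReal.ofReal (S.um b) := by
          rw [lintegral_indicator measurableSet_Ioo, setLIntegral_const,
            Measure.restrict_apply measurableSet_Ioo,
            Set.inter_eq_left.2 Set.Ioo_subset_Ioi_self]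
          rw [Real.volume_Ioo, sub_zero]
      _ ≤ ENNReal.ofReal C := by
          rw [← ENNReal.ofReal_mul hPAr.le]
          refine ENNReal.ofReal_le_ofReal ?_
          have h1 : S.um b ≤ S.um 1 * (1 + b) := um_growth S hb0
          nlinarith
  -- conclude
  refine ⟨X, hfeas, ?_⟩
  rw [Vval, hXp, hXm]
  have h1 : ((ENNReal.ofReal (t * S.up a)) : EReal) ≤ ((Vpl S Xp) : EReal) :=
    EReal.coe_ennreal_le_coe_ennreal_iff.2 hVpl
  have h2 : ((Vmn S Xm) : EReal) ≤ ((ENNReal.ofReal C) : EReal) :=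
    EReal.coe_ennreal_le_coe_ennreal_iff.2 hVmn
  have hMlt : M < t * S.up a - C := by linarith
  calc (M : EReal) < ((t * S.up a - C : ℝ) : EReal) := EReal.coe_lt_coe_iff.2 hMlt
    _ = ((t * S.up a : ℝ) : EReal) - ((C : ℝ) : EReal) := by rw [← EReal.coe_sub]
    _ = ((ENNReal.ofReal (t * S.up a)) : EReal) - ((ENNReal.ofReal C) : EReal) := by
        rw [EReal.coe_ennreal_ofReal, EReal.coe_ennreal_ofReal,
          max_eq_left (by positivity : (0:ℝ) ≤ t * S.up a), max_eq_left hC]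
    _ ≤ ((Vpl S Xp) : EReal) - ((Vmn S Xm) : EReal) := EReal.sub_le_sub h1 h2

/-- Theorem 3.2: if `u₊` is unbounded, `esssup ρ = +∞`, and
`T₋` is the identity (no distortion on losses), then Problem (P) is ill-posed. -/
theorem illposed_of_no_loss_distortion (S : BSetup Ω)
    (hup_unbdd : ∀ M : ℝ, ∃ x : ℝ, 0 ≤ x ∧ M < S.up x)
    (hbar : rhoBar S = ⊤)
    (hTm : ∀ x ∈ Set.Icc (0:ℝ) 1, S.Tm x = x) :
    IllposedP S := by
  rw [IllposedP, supP, sSup_eq_top]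
  intro w hw
  set M : ℝ := if w = ⊥ then 0 else w.toReal with hMdef
  obtain ⟨X, hfeas, hlt⟩ := exists_feasible_gt S hup_unbdd hbar hTm M
  refine ⟨Vval S X, ⟨X, hfeas, rfl⟩, lt_of_le_of_lt ?_ hlt⟩
  by_cases hwb : w = ⊥
  · simp [hwb]
  · rw [hMdef, if_neg hwb, EReal.coe_toReal hw.ne hwb]

end
end

section
/- Problem (P) is ill-posed (its supremum is +∞) if and only if Problem (S) is ill-posed (its supremum is +∞). -/
open MeasureTheory Set Filter
open scoped ENNReal symmDiff

noncomputable section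

variable {Ω : Type*} [MeasurableSpace Ω]

section AuxLemmas

lemma coe_enn_toReal' (x : ℝ≥0∞) (h : x ≠ ⊤) : x.toEReal = ((x.toReal : ℝ) : EReal) := by
  rw [show x.toEReal = (x : EReal) from rfl, ← EReal.toReal_coe_ennreal (x := x)]
  exact (EReal.coe_toReal (by simpa using h) (by simp)).symm

lemma Vpl_congr (S : BSetup Ω) {Y Y' : Ω → ℝ} (h : Y =ᵐ[S.P] Y') :
    Vpl S Y = Vpl S Y' := by
  simp only [Vpl]
  refine lintegral_congr fun y => ?_
  have : S.P {ω | y < S.up (Y ω)} = S.P {ω | y < S.up (Y' ω)} := by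
    apply measure_congr
    rw [Filter.eventuallyEq_set]
    filter_upwards [h] with ω hω
    simp [hω]
  rw [this]

lemma Vmn_congr (S : BSetup Ω) {Y Y' : Ω → ℝ} (h : Y =ᵐ[S.P] Y') :
    Vmn S Y = Vmn S Y' := by
  simp only [Vmn]
  refine lintegral_congr fun y => ?_
  have : S.P {ω | y < S.um (Y ω)} = S.P {ω | y < S.um (Y' ω)} := by
    apply measure_congr
    rw [Filter.eventuallyEq_set]
    filter_upwards [h] with ω hω
    simp [hω]
  rw [this]

lemma Vpl_zero (S : BSetup Ω) {Y : Ω → ℝ} (h : ∀ᵐ ω ∂S.P, Y ω = 0) : Vpl S Y = 0 := by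
  simp only [Vpl]
  have key : ∀ y ∈ Set.Ioi (0:ℝ),
      ENNReal.ofReal (S.Tp ((S.P {ω | y < S.up (Y ω)}).toReal)) = 0 := by
    intro y hy
    have hnull : S.P {ω | y < S.up (Y ω)} = 0 := by
      apply measure_eq_zero_iff_ae_notMem.mpr
      filter_upwards [h] with ω hω
      simp only [Set.mem_setOf_eq, hω, S.up_zero, not_lt]
      exact le_of_lt hy
    rw [hnull]
    simp [S.Tp_zero]
  rw [setLIntegral_congr_fun measurableSet_Ioi key]
  simp

lemma Vmn_zero (S : BSetup Ω) {Y : Ω → ℝ} (h : ∀ᵐ ω ∂S.P, Y ω = 0) : Vmn S Y = 0 := by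
  simp only [Vmn]
  have key : ∀ y ∈ Set.Ioi (0:ℝ),
      ENNReal.ofReal (S.Tm ((S.P {ω | y < S.um (Y ω)}).toReal)) = 0 := by
    intro y hy
    have hnull : S.P {ω | y < S.um (Y ω)} = 0 := by
      apply measure_eq_zero_iff_ae_notMem.mpr
      filter_upwards [h] with ω hω
      simp only [Set.mem_setOf_eq, hω, S.um_zero, not_lt]
      exact le_of_lt hy
    rw [hnull]
    simp [S.Tm_zero]
  rw [setLIntegral_congr_fun measurableSet_Ioi key]
  simp

end AuxLemmas

/-- Proposition 5.1: Problem (P) is ill-posed if and only if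
Problem (S) is ill-posed. -/
theorem illposedP_iff_illposedS (S : BSetup Ω) (hfin : FinCond S) :
    IllposedP S ↔ supS S = ⊤ := by
  haveI := S.isProb
  constructor
  · -- (P) ill-posed → (S) ill-posed
    intro hP
    rw [supS, sSup_eq_top]
    intro b hb
    -- pick a real bound above b
    set Mr : ℝ := max b.toReal 0 with hMr
    have hbM : b ≤ ((Mr : ℝ) : EReal) := by
      induction b with
      | bot => exact bot_le
      | coe b' =>
          rw [EReal.coe_le_coe_iff, hMr, EReal.toReal_coe]
          exact le_max_left _ _
      | top => exact absurd hb (lt_irrefl _)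
    obtain ⟨v, hv, hvM⟩ := sSup_eq_top.1 hP ((Mr : ℝ) : EReal) (EReal.coe_lt_top Mr)
    obtain ⟨X, hXfeas, rfl⟩ := hv
    obtain ⟨hXmeas, ⟨b0, hb0⟩, hXint, hXval⟩ := hXfeas
    -- measurable version
    set Xt := hXmeas.mk X with hXtdef
    have hXae : X =ᵐ[S.P] Xt := hXmeas.ae_eq_mk
    have hXtmeas : Measurable Xt := hXmeas.measurable_mk
    set A := {ω | 0 < Xt ω} with hAdef
    have hA : MeasurableSet A := measurableSet_lt measurable_const hXtmeas
    set Xp := fun ω => max (X ω) 0 with hXpdef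
    set Xm := fun ω => max (-X ω) 0 with hXmdef
    set c0 := max (-b0) 0 with hc0
    have hXm_le : ∀ᵐ ω ∂S.P, Xm ω ≤ c0 := by
      filter_upwards [hb0] with ω hω
      exact max_le_max (neg_le_neg hω) le_rfl
    have hρpos := S.ρ_pos
    have hXm_meas : AEMeasurable Xm S.P := (hXmeas.neg.max aemeasurable_const)
    have hXp_meas : AEMeasurable Xp S.P := (hXmeas.max aemeasurable_const)
    have hXm_int : Integrable (fun ω => S.ρ ω * Xm ω) S.P := by
      refine Integrable.mono' (S.ρ_int.const_mul c0) ?_ ?_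
      · exact ((S.meas_ρ.aemeasurable.mul hXm_meas)).aestronglyMeasurable
      · filter_upwards [hρpos, hXm_le] with ω h1 h2
        rw [Real.norm_eq_abs, abs_of_nonneg (mul_nonneg h1.le (le_max_right _ _))]
        calc S.ρ ω * Xm ω ≤ S.ρ ω * c0 := mul_le_mul_of_nonneg_left h2 h1.le
          _ = c0 * S.ρ ω := mul_comm _ _
    have hmax_id : ∀ x : ℝ, max x 0 = x + max (-x) 0 := by
      intro x
      rcases le_total x 0 with h | h
      · rw [max_eq_right h, max_eq_left (by linarith)]; ring
      · rw [max_eq_left h, max_eq_right (by linarith)]; ring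
    have hXp_eq : (fun ω => S.ρ ω * Xp ω)
        = fun ω => S.ρ ω * X ω + S.ρ ω * Xm ω := by
      funext ω
      simp only [hXpdef, hXmdef]
      rw [hmax_id (X ω)]; ring
    have hXp_int : Integrable (fun ω => S.ρ ω * Xp ω) S.P := by
      rw [hXp_eq]; exact hXint.add hXm_int
    set xp := ∫ ω, S.ρ ω * Xp ω ∂S.P with hxpdef
    have hxm_nonneg : 0 ≤ ∫ ω, S.ρ ω * Xm ω ∂S.P := by
      refine integral_nonneg_of_ae ?_
      filter_upwards [hρpos] with ω h1
      exact mul_nonneg h1.le (le_max_right _ _)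
    have hxp_split : xp = S.x0 + ∫ ω, S.ρ ω * Xm ω ∂S.P := by
      rw [hxpdef, hXp_eq, integral_add hXint hXm_int, hXval]
    have hxm_val : (∫ ω, S.ρ ω * Xm ω ∂S.P) = xp - S.x0 := by
      rw [hxp_split]; ring
    have hxp_nonneg : 0 ≤ xp := by
      refine integral_nonneg_of_ae ?_
      filter_upwards [hρpos] with ω h1
      exact mul_nonneg h1.le (le_max_right _ _)
    have hxp_ge : max S.x0 0 ≤ xp := by
      rw [hxp_split]
      refine max_le (by linarith) (by linarith)
    -- supports
    have hXp_supp : ∀ᵐ ω ∂S.P, ω ∉ A → Xp ω = 0 := by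
      filter_upwards [hXae] with ω hω hnA
      have : Xt ω ≤ 0 := not_lt.1 hnA
      simp only [hXpdef]
      rw [hω]
      exact max_eq_right this
    have hXm_supp : ∀ᵐ ω ∂S.P, ω ∈ A → Xm ω = 0 := by
      filter_upwards [hXae] with ω hω hA'
      have h0 : 0 < Xt ω := hA'
      simp only [hXmdef]
      rw [hω]
      exact max_eq_right (by linarith)
    -- feasibility of the two parts
    have hfeasp : FeasPos S A xp Xp :=
      ⟨hXp_meas, ae_of_all _ (fun ω => le_max_right _ _), hXp_int, rfl, hXp_supp⟩
    have hfeasm : FeasNeg S A xp Xm :=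
      ⟨hXm_meas, ae_of_all _ (fun ω => le_max_right _ _), ⟨c0, hXm_le⟩,
        hXm_int, hxm_val, hXm_supp⟩
    -- the edge conditions
    have hA0 : S.P A = 0 → xp = 0 := by
      intro h0
      have hAe : ∀ᵐ ω ∂S.P, ω ∉ A := measure_eq_zero_iff_ae_notMem.1 h0
      have : (fun ω => S.ρ ω * Xp ω) =ᵐ[S.P] fun _ => 0 := by
        filter_upwards [hAe, hXp_supp] with ω h1 h2
        rw [h2 h1, mul_zero]
      rw [hxpdef, integral_congr_ae this, integral_zero]
    have hA1 : S.P A = 1 → xp = S.x0 := by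
      intro h1
      have hcompl : S.P Aᶜ = 0 := by
        rw [measure_compl hA (measure_ne_top _ _), h1, measure_univ, tsub_self]
      have hAe : ∀ᵐ ω ∂S.P, ω ∈ A := by
        rw [ae_iff]
        exact hcompl
      have : (fun ω => S.ρ ω * Xm ω) =ᵐ[S.P] fun _ => 0 := by
        filter_upwards [hAe, hXm_supp] with ω hω h2
        rw [h2 hω, mul_zero]
      have h0 : (∫ ω, S.ρ ω * Xm ω ∂S.P) = 0 := by
        rw [integral_congr_ae this, integral_zero]
      rw [hxm_val] at h0
      linarith
    -- value comparison
    have hvPos_ge : (Vpl S Xp).toEReal ≤ vPos S A xp := by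
      rw [vPos]
      split_ifs with h1 h2
      · have hAe : ∀ᵐ ω ∂S.P, ω ∉ A := measure_eq_zero_iff_ae_notMem.1 h1
        have hz : ∀ᵐ ω ∂S.P, Xp ω = 0 := by
          filter_upwards [hAe, hXp_supp] with ω hω h2'
          exact h2' hω
        rw [Vpl_zero S hz]
        exact le_refl _
      · exact absurd (hA0 h1) h2
      · exact le_sSup ⟨Xp, hfeasp, rfl⟩
    have hvNeg_le : vNeg S A xp ≤ (Vmn S Xm).toEReal := by
      rw [vNeg]
      split_ifs with h1 h2
      · exact EReal.coe_ennreal_nonneg _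
      · exact absurd (hA1 h1) h2
      · exact sInf_le ⟨Xm, hfeasm, rfl⟩
    have hobj : Vval S X ≤ objS S A xp := by
      rw [objS]
      have hVval : Vval S X = (Vpl S Xp).toEReal - (Vmn S Xm).toEReal := rfl
      rw [hVval]
      exact EReal.sub_le_sub hvPos_ge hvNeg_le
    have hfeasS : FeasS S A xp := ⟨hA, hxp_ge, hA0, hA1⟩
    exact ⟨objS S A xp, ⟨A, xp, hfeasS, rfl⟩,
      lt_of_lt_of_le (lt_of_le_of_lt hbM hvM) hobj⟩
  · -- (S) ill-posed → (P) ill-posed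
    intro hS
    rw [IllposedP, supP, sSup_eq_top]
    intro b hb
    set Mr : ℝ := max b.toReal 0 + 1 with hMrdef
    have hMr1 : 1 ≤ Mr := by
      rw [hMrdef]
      have := le_max_right b.toReal (0:ℝ)
      linarith
    have hbM : b ≤ ((Mr - 1 : ℝ) : EReal) := by
      induction b with
      | bot => exact bot_le
      | coe b' =>
          rw [EReal.coe_le_coe_iff, hMrdef, EReal.toReal_coe]
          have := le_max_left b' (0:ℝ)
          linarith
      | top => exact absurd hb (lt_irrefl _)
    obtain ⟨v, hv, hvM⟩ := sSup_eq_top.1 hS ((Mr : ℝ) : EReal) (EReal.coe_lt_top Mr)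
    obtain ⟨A, xp, hfeasS, rfl⟩ := hv
    rw [objS] at hvM
    -- vNeg is finite and nonnegative
    have hvNeg_ne_top : vNeg S A xp ≠ ⊤ := by
      intro h
      rw [h, EReal.sub_top] at hvM
      exact absurd hvM (not_lt_bot)
    have hvNeg_nonneg : (0 : EReal) ≤ vNeg S A xp := by
      rw [vNeg]
      split_ifs
      · exact le_refl _
      · exact le_top
      · refine le_sInf ?_
        rintro v ⟨X, _, rfl⟩
        exact EReal.coe_ennreal_nonneg _
    have hvNeg_ne_bot : vNeg S A xp ≠ ⊥ := by
      intro h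
      rw [h] at hvNeg_nonneg
      simp at hvNeg_nonneg
    set r := (vNeg S A xp).toReal with hrdef
    have hr : vNeg S A xp = ((r : ℝ) : EReal) :=
      (EReal.coe_toReal hvNeg_ne_top hvNeg_ne_bot).symm
    have hr0 : (0:ℝ) ≤ r := by
      have := hvNeg_nonneg
      rw [hr] at this
      exact_mod_cast this
    -- vPos is large
    have hvPos : ((Mr + r : ℝ) : EReal) < vPos S A xp := by
      rw [hr] at hvM
      have := EReal.add_lt_of_lt_sub hvM
      rwa [← EReal.coe_add] at this
    have hPA : S.P A ≠ 0 := by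
      intro h
      rw [vPos, if_pos h] at hvPos
      split_ifs at hvPos with h2
      · have : (Mr + r : ℝ) < 0 := by
          have := hvPos
          rw [show (0:EReal) = ((0:ℝ):EReal) from rfl] at this
          exact_mod_cast this
        linarith
      · exact absurd hvPos (not_lt_bot)
    rw [vPos, if_neg hPA] at hvPos
    obtain ⟨vp, ⟨Xp, hfp, rfl⟩, hvp⟩ := lt_sSup_iff.1 hvPos
    -- near-optimal negative part
    have hXmex : ∃ Xm : Ω → ℝ, FeasNeg S A xp Xm ∧
        (Vmn S Xm).toEReal < ((r + 1 : ℝ) : EReal) := by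
      by_cases hPA1 : S.P A = 1
      · have hxpx0 : xp = S.x0 := hfeasS.2.2.2 hPA1
        refine ⟨fun _ => 0, ⟨aemeasurable_const, ae_of_all _ (fun _ => le_refl _),
          ⟨0, ae_of_all _ (fun _ => le_refl _)⟩, by simpa using (integrable_const (0:ℝ)),
          by simp [hxpx0], ae_of_all _ (fun _ _ => rfl)⟩, ?_⟩
        rw [Vmn_zero S (ae_of_all _ (fun _ => rfl))]
        rw [show ((0:ℝ≥0∞)).toEReal = ((0:ℝ):EReal) by simp]
        exact_mod_cast (by linarith : (0:ℝ) < r + 1)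
      · have hlt : vNeg S A xp < ((r + 1 : ℝ) : EReal) := by
          rw [hr]
          exact_mod_cast (by linarith : r < r + 1)
        rw [vNeg, if_neg hPA1] at hlt
        obtain ⟨v, ⟨Xm, hfm, rfl⟩, hv⟩ := sInf_lt_iff.1 hlt
        exact ⟨Xm, hfm, hv⟩
    obtain ⟨Xm, hfm, hVm⟩ := hXmex
    obtain ⟨hXpmeas, hXp0, hXpint, hXpval, hXpsupp⟩ := hfp
    obtain ⟨hXmmeas, hXm0, ⟨bm, hbm⟩, hXmint, hXmval, hXmsupp⟩ := hfm
    set X := fun ω => Xp ω - Xm ω with hXdef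
    have hρmul : (fun ω => S.ρ ω * X ω)
        = fun ω => S.ρ ω * Xp ω - S.ρ ω * Xm ω := by
      funext ω; simp only [hXdef]; ring
    have hfeasX : FeasP S X := by
      refine ⟨hXpmeas.sub hXmmeas, ⟨-bm, ?_⟩, ?_, ?_⟩
      · filter_upwards [hXp0, hbm] with ω h1 h2
        simp only [hXdef]
        linarith
      · rw [hρmul]; exact hXpint.sub hXmint
      · rw [hρmul, integral_sub hXpint hXmint, hXpval, hXmval]; ring
    have hmaxp : (fun ω => max (X ω) 0) =ᵐ[S.P] Xp := by
      filter_upwards [hXp0, hXm0, hXpsupp, hXmsupp] with ω h1 h2 h3 h4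
      by_cases hω : ω ∈ A
      · have hm0 : Xm ω = 0 := h4 hω
        simp only [hXdef, hm0, sub_zero]
        exact max_eq_left h1
      · have hp0 : Xp ω = 0 := h3 hω
        simp only [hXdef, hp0, zero_sub]
        rw [max_eq_right (by linarith)]
    have hmaxm : (fun ω => max (-X ω) 0) =ᵐ[S.P] Xm := by
      filter_upwards [hXp0, hXm0, hXpsupp, hXmsupp] with ω h1 h2 h3 h4
      by_cases hω : ω ∈ A
      · have hm0 : Xm ω = 0 := h4 hω
        simp only [hXdef, hm0, sub_zero]
        rw [max_eq_right (by linarith)]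
      · have hp0 : Xp ω = 0 := h3 hω
        simp only [hXdef, hp0, zero_sub, neg_neg]
        exact max_eq_left h2
    have hVX : Vval S X = (Vpl S Xp).toEReal - (Vmn S Xm).toEReal := by
      rw [Vval, Vpl_congr S hmaxp, Vmn_congr S hmaxm]
    have hVp_ne_top : Vpl S Xp ≠ ⊤ := (hfin Xp hXpmeas hXp0 hXpint).ne
    have hVm_ne_top : Vmn S Xm ≠ ⊤ := by
      intro h
      rw [h] at hVm
      exact absurd hVm (by simp [show ((⊤:ℝ≥0∞)).toEReal = (⊤:EReal) from rfl])
    set p := (Vpl S Xp).toReal with hpdef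
    set m := (Vmn S Xm).toReal with hmdef
    have hp : Mr + r < p := by
      rw [coe_enn_toReal' _ hVp_ne_top] at hvp
      exact_mod_cast hvp
    have hm : m < r + 1 := by
      rw [coe_enn_toReal' _ hVm_ne_top] at hVm
      exact_mod_cast hVm
    have hVX' : Vval S X = ((p - m : ℝ) : EReal) := by
      rw [hVX, coe_enn_toReal' _ hVp_ne_top, coe_enn_toReal' _ hVm_ne_top,
        ← EReal.coe_sub]
    refine ⟨Vval S X, ⟨X, hfeasX, rfl⟩, ?_⟩
    rw [hVX']
    refine lt_of_le_of_lt hbM ?_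
    exact_mod_cast (by linarith : (Mr - 1 : ℝ) < p - m)

end
end

section
/- If x₊ > 0 and the positive part problem with parameters ({ρ ≤ c}, x₊) admits an optimal solution, then v₊(c̄, x₊) > v₊(c, x₊) for every c̄ > c satisfying P{c < ρ ≤ c̄} > 0. -/
open MeasureTheory Set Filter
open scoped ENNReal symmDiff

noncomputable section

variable {Ω : Type*} [MeasurableSpace Ω]

lemma isUpperSet_measurableSet' {s : Set ℝ} (hs : IsUpperSet s) : MeasurableSet s := by
  rcases s.eq_empty_or_nonempty with rfl|hne
  · exact MeasurableSet.empty
  by_cases hb : BddBelow s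
  · have h1 : Ioi (sInf s) ⊆ s := fun x hx => by
      obtain ⟨y, hy, hyx⟩ := exists_lt_of_csInf_lt hne hx
      exact hs hyx.le hy
    have h2 : s ⊆ Ici (sInf s) := fun x hx => csInf_le hb hx
    by_cases hA : sInf s ∈ s
    · have : s = Ici (sInf s) :=
        Subset.antisymm h2 (fun x hx => (eq_or_lt_of_le (show sInf s ≤ x from hx)).elim (fun h => h ▸ hA) (fun h => h1 h))
      rw [this]; exact measurableSet_Ici
    · have : s = Ioi (sInf s) :=
        Subset.antisymm (fun x hx => lt_of_le_of_ne (show sInf s ≤ x from h2 hx) (fun h => hA (h ▸ hx))) h1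
      rw [this]; exact measurableSet_Ioi
  · have : s = univ := by
      ext x; simp only [mem_univ, iff_true]
      obtain ⟨y, hy, hyx⟩ : ∃ y ∈ s, y < x := by
        by_contra h; push_neg at h; exact (hb ⟨x, fun z hz => h z hz⟩).elim
      exact hs hyx.le hy
    rw [this]; exact MeasurableSet.univ

lemma Vpl_congr_ae (S : BSetup Ω) {Y Z : Ω → ℝ} (h : Y =ᵐ[S.P] Z) : Vpl S Y = Vpl S Z := by
  unfold Vpl
  refine lintegral_congr fun y => ?_
  congr 3
  apply measure_congr
  rw [Filter.eventuallyEq_set]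
  filter_upwards [h] with ω hω
  simp [hω]

lemma up_set_meas (S : BSetup Ω) {f : Ω → ℝ} (hf : Measurable f) (hnn : ∀ ω, 0 ≤ f ω) (y : ℝ) :
    MeasurableSet {ω | y < S.up (f ω)} := by
  have hset : {ω | y < S.up (f ω)} = f ⁻¹' {t | 0 ≤ t ∧ y < S.up t} := by
    ext ω; simp [hnn ω]
  rw [hset]
  refine hf (isUpperSet_measurableSet' ?_)
  intro t1 t2 h12 ht1
  exact ⟨ht1.1.trans h12, lt_of_lt_of_le ht1.2 (S.up_mono.monotoneOn ht1.1 (ht1.1.trans h12) h12)⟩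

lemma up_slope (S : BSetup Ω) (C : ℝ) : ∃ ε > 0, ∀ t : ℝ, 0 < t → t < ε → C * t ≤ S.up t := by
  have h : ∀ᶠ x in nhdsWithin (0:ℝ) (Ioi 0), 2 * C ≤ S.up' x :=
    S.up'_zero.eventually (eventually_ge_atTop (2 * C))
  obtain ⟨u, hu, hsub⟩ := (mem_nhdsGT_iff_exists_Ioo_subset' (zero_lt_one)).1 h
  refine ⟨u, hu, fun t ht htu => ?_⟩
  have hcont : ContinuousOn S.up (Icc (t/2) t) := fun x hx =>
    ((S.up_deriv x (lt_of_lt_of_le (by linarith) hx.1)).continuousAt).continuousWithinAt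
  have hderiv : ∀ x ∈ Ioo (t/2) t, HasDerivAt S.up (S.up' x) x := fun x hx =>
    S.up_deriv x (lt_trans (by linarith) hx.1)
  obtain ⟨ξ, hξ, hsl⟩ :=
    exists_hasDerivAt_eq_slope S.up S.up' (by linarith : t/2 < t) hcont hderiv
  have h2C : 2 * C ≤ S.up' ξ := hsub ⟨lt_trans (by linarith) hξ.1, lt_trans hξ.2 htu⟩
  have hpos : 0 < S.up (t/2) := by
    have := S.up_mono (le_refl (0:ℝ)) (by linarith : (0:ℝ) ≤ t/2) (by linarith)
    rwa [S.up_zero] at this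
  have hEq : S.up t - S.up (t/2) = S.up' ξ * (t - t/2) := by
    rw [hsl, div_mul_cancel₀]
    linarith
  nlinarith [mul_le_mul_of_nonneg_right h2C (by linarith : (0:ℝ) ≤ t - t/2)]

set_option maxHeartbeats 2000000 in
/-- Proposition 6.1: if `x₊ > 0` and the positive part problem
with parameters `({ρ ≤ c}, x₊)` admits an optimal solution, then
`v₊(c̄, x₊) > v₊(c, x₊)` for every `c̄ > c` with `P{c < ρ ≤ c̄} > 0`. -/
theorem vPos_strict_increasing (S : BSetup Ω) (hfin : FinCond S)
    (c : EReal) (xp : ℝ) (hxp : 0 < xp)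
    (hopt : ∃ X : Ω → ℝ, OptPos S (lev S c) xp X)
    (cb : EReal) (hcb : c < cb)
    (hP : S.P {ω | c < (S.ρ ω : EReal) ∧ (S.ρ ω : EReal) ≤ cb} ≠ 0) :
    vPos S (lev S c) xp < vPos S (lev S cb) xp := by
  haveI : IsProbabilityMeasure S.P := S.isProb
  obtain ⟨X0, hX0feas, hX0opt⟩ := hopt
  obtain ⟨hX0m, hX0nn, hX0int, hX0bud, hX0zero⟩ := hX0feas
  -- measurable nonnegative version of the optimal solution
  set X : Ω → ℝ := fun ω => max (hX0m.mk X0 ω) 0 with hXdef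
  have hXm : Measurable X := hX0m.measurable_mk.max measurable_const
  have hXae : X =ᵐ[S.P] X0 := by
    filter_upwards [hX0m.ae_eq_mk, hX0nn] with ω h1 h2
    simp only [hXdef, ← h1]
    exact max_eq_left h2
  have hXnn : ∀ ω, 0 ≤ X ω := fun ω => le_max_right _ _
  have hXint : Integrable (fun ω => S.ρ ω * X ω) S.P :=
    hX0int.congr (by filter_upwards [hXae] with ω h; rw [h])
  have hXbud : (∫ ω, S.ρ ω * X ω ∂S.P) = xp := by
    rw [integral_congr_ae (g := fun ω => S.ρ ω * X0 ω)
      (by filter_upwards [hXae] with ω h; rw [h])]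
    exact hX0bud
  set A : Set Ω := lev S c with hAdef
  have hXzero : ∀ᵐ ω ∂S.P, ω ∉ A → X ω = 0 := by
    filter_upwards [hXae, hX0zero] with ω h1 h2 h3; rw [h1]; exact h2 h3
  have hVXfin : Vpl S X < ⊤ := hfin X hXm.aemeasurable (Filter.Eventually.of_forall hXnn) hXint
  -- basic sets
  set B : Set Ω := {ω | c < (S.ρ ω : EReal) ∧ (S.ρ ω : EReal) ≤ cb} with hBdef
  have hmeasρE : Measurable (fun ω => (S.ρ ω : EReal)) :=
    measurable_coe_real_ereal.comp S.meas_ρ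
  have hBmeas : MeasurableSet B := by
    have : B = (fun ω => (S.ρ ω : EReal)) ⁻¹' (Ioi c ∩ Iic cb) := by
      ext ω; simp [hBdef, Set.mem_setOf_eq]
    rw [this]; exact hmeasρE (measurableSet_Ioi.inter measurableSet_Iic)
  have hAmeas : MeasurableSet A := by
    have : A = (fun ω => (S.ρ ω : EReal)) ⁻¹' (Iic c) := rfl
    rw [this]; exact hmeasρE measurableSet_Iic
  have hABdisj : Disjoint A B :=
    Set.disjoint_left.mpr (fun ω hA hB => absurd hB.1 (not_lt.2 hA))
  have hPB : 0 < S.P B := pos_iff_ne_zero.mpr hP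
  set PBr : ℝ := (S.P B).toReal with hPBrdef
  have hPBr : 0 < PBr := ENNReal.toReal_pos hP (measure_ne_top _ _)
  have hPBr1 : PBr ≤ 1 := by
    rw [hPBrdef, ← ENNReal.toReal_one]
    exact ENNReal.toReal_mono ENNReal.one_ne_top prob_le_one
  -- the expectation of ρ over B
  set EB : ℝ := ∫ ω in B, S.ρ ω ∂S.P with hEBdef
  have hEB : 0 < EB := by
    rw [hEBdef]
    rw [setIntegral_pos_iff_support_of_nonneg_ae
      (ae_restrict_of_ae (S.ρ_pos.mono fun ω h => h.le)) S.ρ_int.integrableOn]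
    refine lt_of_lt_of_le hPB (measure_mono_ae ?_)
    filter_upwards [S.ρ_pos] with ω h hB
    exact ⟨ne_of_gt h, hB⟩
  -- monotonicity facts for Tp and up
  have hupm : MonotoneOn S.up (Ici 0) := S.up_mono.monotoneOn
  have hTm : ∀ a b : ℝ, 0 ≤ a → a ≤ b → b ≤ 1 → S.Tp a ≤ S.Tp b := fun a b ha hab hb =>
    S.Tp_mono.monotoneOn ⟨ha, hab.trans hb⟩ ⟨ha.trans hab, hb⟩ hab
  have hT0 : ∀ a : ℝ, 0 ≤ a → a ≤ 1 → 0 ≤ S.Tp a := fun a h1 h2 =>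
    S.Tp_zero ▸ hTm 0 a le_rfl h1 h2
  have hTc : ContinuousOn S.Tp (Icc 0 1) := S.Tp_diff.continuousOn
  -- the minimal increment δ₀
  set g : ℝ → ℝ := fun p => S.Tp (p + PBr) - S.Tp p with hgdef
  have hgcont : ContinuousOn g (Icc 0 (1 - PBr)) := by
    refine ContinuousOn.sub ?_ (hTc.mono ?_)
    · refine hTc.comp (Continuous.continuousOn (by continuity)) ?_
      intro p hp
      simp only [Set.mem_Icc] at hp ⊢
      constructor <;> linarith [hPBr.le, hp.1, hp.2]
    · intro p hp
      simp only [Set.mem_Icc] at hp ⊢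
      constructor <;> linarith [hPBr.le, hp.1, hp.2]
  obtain ⟨p₀, hp₀K, hp₀min⟩ :=
    isCompact_Icc.exists_isMinOn (Set.nonempty_Icc.mpr (by linarith)) hgcont
  set δ₀ : ℝ := g p₀ with hδdef
  have hδpos : 0 < δ₀ := by
    rw [hδdef, hgdef]
    simp only [sub_pos]
    exact S.Tp_mono ⟨hp₀K.1, by linarith [hp₀K.2]⟩
      ⟨by linarith [hp₀K.1], by linarith [hp₀K.2]⟩ (by linarith)
  have hδmin : ∀ p : ℝ, 0 ≤ p → p ≤ 1 - PBr → δ₀ ≤ S.Tp (p + PBr) - S.Tp p := fun p h1 h2 =>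
    hp₀min ⟨h1, h2⟩
  -- the parameters
  set M : ℝ := (Vpl S X).toReal with hMdef
  have hM0 : 0 ≤ M := ENNReal.toReal_nonneg
  set k : ℝ := xp / EB with hkdef
  have hk : 0 < k := div_pos hxp hEB
  obtain ⟨ε, hε, hslope⟩ := up_slope S ((M + 1) / (δ₀ * k))
  set t₀ : ℝ := min (ε/2) (k/2) with ht₀def
  have ht₀pos : 0 < t₀ := lt_min (by linarith) (by linarith)
  have ht₀ε : t₀ < ε := lt_of_le_of_lt (min_le_left _ _) (by linarith)
  have ht₀k : t₀ ≤ k/2 := min_le_right _ _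
  set l : ℝ := 1 - t₀ / k with hldef
  have hl0 : 0 < l := by
    have : t₀ / k ≤ 1/2 := by
      rw [div_le_iff₀ hk]; linarith
    rw [hldef]; linarith
  have hl1 : l < 1 := by
    have : 0 < t₀ / k := div_pos ht₀pos hk
    rw [hldef]; linarith
  set d : ℝ := t₀ with hddef
  have hd : 0 < d := ht₀pos
  -- the competitor
  set Xb : Ω → ℝ := fun ω => l * X ω + d * B.indicator (fun _ => (1:ℝ)) ω with hXbdef
  have hXbm : Measurable Xb :=
    (hXm.const_mul l).add ((measurable_const.indicator hBmeas).const_mul d)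
  have hindnn : ∀ ω, 0 ≤ B.indicator (fun _ => (1:ℝ)) ω :=
    fun ω => Set.indicator_nonneg (fun _ _ => zero_le_one) ω
  have hXbnn : ∀ ω, 0 ≤ Xb ω := fun ω =>
    add_nonneg (mul_nonneg hl0.le (hXnn ω)) (mul_nonneg hd.le (hindnn ω))
  have hXblX : ∀ ω, l * X ω ≤ Xb ω := fun ω =>
    le_add_of_nonneg_right (mul_nonneg hd.le (hindnn ω))
  have hρXb : (fun ω => S.ρ ω * Xb ω)
      = fun ω => l * (S.ρ ω * X ω) + d * (B.indicator S.ρ ω) := by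
    funext ω
    by_cases hω : ω ∈ B <;>
      simp [hXbdef, Set.indicator_of_mem, Set.indicator_of_notMem, hω] <;> ring
  have hXbint : Integrable (fun ω => S.ρ ω * Xb ω) S.P := by
    rw [hρXb]
    exact ((hXint.const_mul l)).add ((S.ρ_int.indicator hBmeas).const_mul d)
  have hXbbud : (∫ ω, S.ρ ω * Xb ω ∂S.P) = xp := by
    rw [hρXb, integral_add (hXint.const_mul l) ((S.ρ_int.indicator hBmeas).const_mul d),
      integral_const_mul, integral_const_mul, integral_indicator hBmeas, hXbud, ← hEBdef]
    have hxpk : t₀ / k * xp = t₀ * EB := by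
      rw [hkdef]; field_simp
    rw [hldef, hddef]; ring_nf
    ring_nf at hxpk
    linarith
  have hXbzero : ∀ᵐ ω ∂S.P, ω ∉ lev S cb → Xb ω = 0 := by
    filter_upwards [hXzero] with ω h1 h2
    have hρcb : cb < (S.ρ ω : EReal) := not_le.1 h2
    have hωA : ω ∉ A := fun hA => absurd (le_trans hA hcb.le) (not_le.2 hρcb)
    have hωB : ω ∉ B := fun hB => absurd hB.2 (not_le.2 hρcb)
    rw [hXbdef]
    simp [h1 hωA, Set.indicator_of_notMem hωB]
  have hXbfeas : FeasPos S (lev S cb) xp Xb :=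
    ⟨hXbm.aemeasurable, Filter.Eventually.of_forall hXbnn, hXbint, hXbbud, hXbzero⟩
  have hupd : 0 < S.up d := by
    have := S.up_mono (le_refl (0:ℝ)) hd.le hd
    rwa [S.up_zero] at this
  have hle1 : ∀ s : Set Ω, (S.P s).toReal ≤ 1 := by
    intro s
    rw [← ENNReal.toReal_one]
    exact ENNReal.toReal_mono ENNReal.one_ne_top prob_le_one
  have hPAB : (S.P A).toReal + PBr ≤ 1 := by
    have h0 : S.P (A ∪ B) = S.P A + S.P B := measure_union hABdisj hBmeas
    have h1 : S.P A + S.P B ≤ 1 := h0 ▸ prob_le_one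
    calc (S.P A).toReal + PBr
        = (S.P A + S.P B).toReal :=
          (ENNReal.toReal_add (measure_ne_top _ _) (measure_ne_top _ _)).symm
      _ ≤ (1 : ℝ≥0∞).toReal := ENNReal.toReal_mono ENNReal.one_ne_top h1
      _ = 1 := ENNReal.toReal_one
  have hkey : Vpl S X < Vpl S Xb := by
    have hlXm : Measurable (fun ω => l * X ω) := hXm.const_mul l
    have hlXnn : ∀ ω, 0 ≤ l * X ω := fun ω => mul_nonneg hl0.le (hXnn ω)
    set F1 : ℝ → ℝ≥0∞ :=
      fun y => ENNReal.ofReal (S.Tp ((S.P {ω | y < S.up (l * X ω)}).toReal)) with hF1def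
    set FV : ℝ → ℝ≥0∞ :=
      fun y => ENNReal.ofReal (S.Tp ((S.P {ω | y < S.up (X ω)}).toReal)) with hFVdef
    set FW : ℝ → ℝ≥0∞ :=
      fun y => ENNReal.ofReal (S.Tp ((S.P {ω | y < S.up (Xb ω)}).toReal)) with hFWdef
    have hanti : ∀ f : Ω → ℝ,
        Antitone (fun y : ℝ => ENNReal.ofReal (S.Tp ((S.P {ω | y < S.up (f ω)}).toReal))) := by
      intro f y1 y2 h12
      apply ENNReal.ofReal_le_ofReal
      refine hTm _ _ ENNReal.toReal_nonneg ?_ (hle1 _)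
      exact ENNReal.toReal_mono (measure_ne_top _ _)
        (measure_mono (fun ω hω => lt_of_le_of_lt h12 hω))
    have hF1meas : Measurable F1 := (hanti _).measurable
    have hFVmeas : Measurable FV := (hanti _).measurable
    have hFWmeas : Measurable FW := (hanti _).measurable
    -- a.e. inclusion of the level sets of l*X in A
    have hUA : ∀ y : ℝ, 0 < y → ∀ᵐ ω ∂S.P, ω ∈ {ω | y < S.up (l * X ω)} → ω ∈ A := by
      intro y hy
      filter_upwards [hXzero] with ω hω hU
      by_contra hA
      have h0 : X ω = 0 := hω hA
      simp only [Set.mem_setOf_eq, h0, mul_zero, S.up_zero] at hU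
      exact absurd hU (not_lt.2 hy.le)
    have hVplX : Vpl S X = ∫⁻ y in Ioi (0:ℝ), FV y := rfl
    have hVplXb : Vpl S Xb = ∫⁻ y in Ioi (0:ℝ), FW y := rfl
    set ind : ℝ → ℝ≥0∞ :=
      (Ioo (0:ℝ) (S.up d)).indicator (fun _ => ENNReal.ofReal δ₀) with hinddef
    -- Step A : pointwise comparison on (0,∞)
    have hWfact : ∀ y ∈ Ioi (0:ℝ), F1 y + ind y ≤ FW y := by
      intro y hy
      have hy0 : (0:ℝ) < y := hy
      have hUW : {ω | y < S.up (l * X ω)} ⊆ {ω | y < S.up (Xb ω)} :=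
        fun ω hω => lt_of_lt_of_le hω (hupm (hlXnn ω) (hXbnn ω) (hXblX ω))
      have hPU1 : (S.P {ω | y < S.up (l * X ω)}).toReal ≤ 1 - PBr := by
        have h0 : S.P ({ω | y < S.up (l * X ω)} \ A) = 0 := by
          rw [measure_eq_zero_iff_ae_notMem]
          filter_upwards [hUA y hy0] with ω h hmem
          exact hmem.2 (h hmem.1)
        have h1 : S.P {ω | y < S.up (l * X ω)} ≤ S.P A :=
          measure_mono_ae (ae_le_set.mpr h0)
        have h2 : (S.P {ω | y < S.up (l * X ω)}).toReal ≤ (S.P A).toReal :=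
          ENNReal.toReal_mono (measure_ne_top _ _) h1
        linarith
      by_cases hyd : y < S.up d
      · have hBW : B ⊆ {ω | y < S.up (Xb ω)} := by
          intro ω hω
          have hXbd : d ≤ Xb ω := by
            have hind : B.indicator (fun _ => (1:ℝ)) ω = 1 := Set.indicator_of_mem hω _
            have : Xb ω = l * X ω + d * 1 := by simp only [hXbdef, hind]
            nlinarith [hXnn ω, hl0.le]
          exact lt_of_lt_of_le hyd (hupm hd.le (hd.le.trans hXbd) hXbd)
        have hdisjUB : AEDisjoint S.P {ω | y < S.up (l * X ω)} B := by
          rw [AEDisjoint, measure_eq_zero_iff_ae_notMem]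
          filter_upwards [hUA y hy0] with ω h hmem
          exact Set.disjoint_left.mp hABdisj (h hmem.1) hmem.2
        have hPW : S.P {ω | y < S.up (l * X ω)} + S.P B ≤ S.P {ω | y < S.up (Xb ω)} := by
          rw [← measure_union₀ hBmeas.nullMeasurableSet hdisjUB]
          exact measure_mono (Set.union_subset hUW hBW)
        have hPWr : (S.P {ω | y < S.up (l * X ω)}).toReal + PBr
            ≤ (S.P {ω | y < S.up (Xb ω)}).toReal := by
          have := ENNReal.toReal_mono (measure_ne_top _ _) hPW
          rwa [ENNReal.toReal_add (measure_ne_top _ _) (measure_ne_top _ _)] at this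
        have hTchain : S.Tp ((S.P {ω | y < S.up (l * X ω)}).toReal) + δ₀
            ≤ S.Tp ((S.P {ω | y < S.up (Xb ω)}).toReal) := by
          have h1 := hδmin _ ENNReal.toReal_nonneg hPU1
          have h2 : S.Tp ((S.P {ω | y < S.up (l * X ω)}).toReal + PBr)
              ≤ S.Tp ((S.P {ω | y < S.up (Xb ω)}).toReal) :=
            hTm _ _ (by positivity) hPWr (hle1 _)
          linarith
        have hindy : ind y = ENNReal.ofReal δ₀ := by
          rw [hinddef]; exact Set.indicator_of_mem (Set.mem_Ioo.mpr ⟨hy0, hyd⟩) _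
        rw [hindy]
        calc F1 y + ENNReal.ofReal δ₀
            = ENNReal.ofReal (S.Tp ((S.P {ω | y < S.up (l * X ω)}).toReal) + δ₀) :=
              (ENNReal.ofReal_add (hT0 _ ENNReal.toReal_nonneg (hle1 _)) hδpos.le).symm
          _ ≤ FW y := ENNReal.ofReal_le_ofReal hTchain
      · have hindy : ind y = 0 := by
          rw [hinddef]
          exact Set.indicator_of_notMem (fun hmem => hyd (Set.mem_Ioo.mp hmem).2) _
        rw [hindy, add_zero]
        exact ENNReal.ofReal_le_ofReal
          (hTm _ _ ENNReal.toReal_nonneg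
            (ENNReal.toReal_mono (measure_ne_top _ _) (measure_mono hUW)) (hle1 _))
    have hstepA : ∫⁻ y in Ioi (0:ℝ), (F1 y + ind y) ≤ Vpl S Xb := by
      rw [hVplXb]; exact setLIntegral_mono hFWmeas hWfact
    have hindmeas : Measurable ind := measurable_const.indicator measurableSet_Ioo
    have hsplit : ∫⁻ y in Ioi (0:ℝ), (F1 y + ind y)
        = (∫⁻ y in Ioi (0:ℝ), F1 y) + ENNReal.ofReal δ₀ * ENNReal.ofReal (S.up d) := by
      rw [lintegral_add_right _ hindmeas]
      congr 1
      rw [hinddef, lintegral_indicator_const measurableSet_Ioo,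
        Measure.restrict_apply measurableSet_Ioo,
        Set.inter_eq_left.mpr (Set.Ioo_subset_Ioi_self), Real.volume_Ioo, sub_zero]
    -- Step B : scaling
    have hstepB : ENNReal.ofReal l * Vpl S X ≤ ∫⁻ y in Ioi (0:ℝ), F1 y := by
      have hpt : ∀ y ∈ Ioi (0:ℝ), FV (l⁻¹ * y) ≤ F1 y := by
        intro y hy
        apply ENNReal.ofReal_le_ofReal
        refine hTm _ _ ENNReal.toReal_nonneg ?_ (hle1 _)
        refine ENNReal.toReal_mono (measure_ne_top _ _) (measure_mono ?_)
        intro ω hω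
        have hω' : l⁻¹ * y < S.up (X ω) := hω
        have h1 : y < l * S.up (X ω) := by
          have := mul_lt_mul_of_pos_left hω' hl0
          rwa [mul_inv_cancel_left₀ hl0.ne'] at this
        have h2 : l * S.up (X ω) ≤ S.up (l * X ω) := by
          have hcc := S.up_concave.2 (hXnn ω) (le_refl (0:ℝ))
            hl0.le (by linarith : (0:ℝ) ≤ 1 - l) (by ring)
          simpa [S.up_zero, smul_eq_mul] using hcc
        exact lt_of_lt_of_le h1 h2
      have hcv : ∫⁻ y in Ioi (0:ℝ), FV (l⁻¹ * y) = ENNReal.ofReal l * Vpl S X := by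
        have e1 : ∫⁻ y in Ioi (0:ℝ), FV (l⁻¹ * y)
            = ∫⁻ y, FV y ∂(Measure.map (l⁻¹ * ·) (volume.restrict (Ioi (0:ℝ)))) :=
          (lintegral_map hFVmeas (measurable_const_mul l⁻¹)).symm
        have hpre : ((l⁻¹ * ·) ⁻¹' (Ioi (0:ℝ))) = Ioi (0:ℝ) := by
          ext y
          simp only [Set.mem_preimage, Set.mem_Ioi]
          constructor
          · intro h
            by_contra h'
            push_neg at h'
            have h2 := mul_le_mul_of_nonneg_left h' (inv_pos.mpr hl0).le
            rw [mul_zero] at h2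
            exact absurd h (not_lt.2 h2)
          · intro h
            exact mul_pos (inv_pos.mpr hl0) h
        have e2 : Measure.map (l⁻¹ * ·) (volume.restrict (Ioi (0:ℝ)))
            = ENNReal.ofReal l • (volume.restrict (Ioi (0:ℝ))) := by
          conv_lhs => rw [show volume.restrict (Ioi (0:ℝ))
            = volume.restrict ((l⁻¹ * ·) ⁻¹' (Ioi 0)) by rw [hpre]]
          rw [← Measure.restrict_map (measurable_const_mul l⁻¹) measurableSet_Ioi,
            Real.map_volume_mul_left (inv_ne_zero hl0.ne'), inv_inv, abs_of_pos hl0,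
            Measure.restrict_smul]
        rw [e1, e2, lintegral_smul_measure, hVplX, smul_eq_mul]
      rw [← hcv]
      exact setLIntegral_mono hF1meas hpt
    -- numeric conclusion
    have hnum : M < l * M + δ₀ * S.up d := by
      have hud : (M + 1) / (δ₀ * k) * d ≤ S.up d := hslope d hd ht₀ε
      have h1 : (M + 1) * (d / k) ≤ δ₀ * S.up d := by
        have h2 := mul_le_mul_of_nonneg_left hud hδpos.le
        have h3 : (M + 1) * (d / k) = δ₀ * ((M + 1) / (δ₀ * k) * d) := by
          field_simp
        rw [h3]; exact h2
      have h2 : M - l * M = d / k * M := by rw [hldef]; ring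
      have h4 : 0 < d / k := div_pos hd hk
      have h6 : (M + 1) * (d / k) = d / k * M + d / k := by ring
      set ud : ℝ := S.up d with hud2
      set dk : ℝ := d / k with hdk2
      linarith
    have hVXeq : Vpl S X = ENNReal.ofReal M := (ENNReal.ofReal_toReal hVXfin.ne).symm
    have hsum : ENNReal.ofReal (l * M + δ₀ * S.up d)
        = ENNReal.ofReal l * Vpl S X + ENNReal.ofReal δ₀ * ENNReal.ofReal (S.up d) := by
      rw [hVXeq, ENNReal.ofReal_add (by positivity) (by positivity),
        ENNReal.ofReal_mul hl0.le, ENNReal.ofReal_mul hδpos.le]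
    have hlt : Vpl S X < ENNReal.ofReal (l * M + δ₀ * S.up d) := by
      rw [hVXeq]
      rw [ENNReal.ofReal_lt_ofReal_iff (by nlinarith)]
      exact hnum
    refine lt_of_lt_of_le hlt ?_
    rw [hsum]
    refine le_trans (add_le_add hstepB le_rfl) ?_
    rw [← hsplit]
    exact hstepA
  -- wiring through vPos
  have hPA : S.P A ≠ 0 := by
    intro h0
    have hAc : ∀ᵐ ω ∂S.P, ω ∉ A := measure_eq_zero_iff_ae_notMem.1 h0
    have : (∫ ω, S.ρ ω * X ω ∂S.P) = 0 := by
      rw [integral_congr_ae (g := fun _ => (0:ℝ))]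
      · exact integral_zero _ _
      · filter_upwards [hAc, hXzero] with ω h1 h2
        rw [h2 h1, mul_zero]
    rw [hXbud] at this; exact absurd this (ne_of_gt hxp)
  have hPAb : S.P (lev S cb) ≠ 0 := by
    refine ne_of_gt (lt_of_lt_of_le hPB (measure_mono ?_))
    intro ω hω; exact hω.2
  have hVX0 : Vpl S X = Vpl S X0 := Vpl_congr_ae S hXae
  rw [vPos, vPos, if_neg hPA, if_neg hPAb]
  have hsup1 : sSup {v : EReal | ∃ Y : Ω → ℝ, FeasPos S A xp Y ∧ v = (Vpl S Y).toEReal}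
      = (Vpl S X0).toEReal := by
    apply le_antisymm
    · refine sSup_le ?_
      rintro v ⟨Y, hYf, rfl⟩
      exact EReal.coe_ennreal_le_coe_ennreal_iff.2 (hX0opt Y hYf)
    · exact le_sSup ⟨X0, ⟨hX0m, hX0nn, hX0int, hX0bud, hX0zero⟩, rfl⟩
  rw [hsup1]
  refine lt_of_lt_of_le ?_ (le_sSup ⟨Xb, hXbfeas, rfl⟩)
  rw [← hVX0]
  exact EReal.coe_ennreal_lt_coe_ennreal_iff.2 hkey

end
end
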